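/- arXiv:1107.4726 — 2 statements merged into one kernel-verified Lean document; each statement's English description precedes it below -/
import Mathlib

section
/- Let (E,‖·‖) be an RN module over ℝ with base (Ω,𝓕,P), G ⊆ E a subset with the countable concatenation property, and f : E → L̄⁰(𝓕) a function with the local property. If the restriction of f to G is proper and bounded from below on G (resp. bounded from above on G), then for each ε ∈ L⁰₊₊(𝓕) there exists x_ε ∈ G such that f(x_ε) ≤ ⋀f(G) + ε (resp. f(x_ε) ≥ ⋁f(G) − ε). -/
open MeasureTheory ENNReal Set Filter

namespace GYY

variable {Ω : Type*} [MeasurableSpace Ω]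

/-- `L⁰(𝓕)`: equivalence classes of real-valued random variables on `(Ω,𝓕,P)`. -/
abbrev L0 (P : Measure Ω) := Ω →ₘ[P] ℝ

/-- `L̄⁰(𝓕)`: equivalence classes of extended-real-valued random variables. -/
abbrev L0e (P : Measure Ω) := Ω →ₘ[P] EReal

/-- `L⁰₊₊(𝓕)`: the (classes of) random variables that are strictly positive a.s. -/
def L0pp (P : Measure Ω) : Set (L0 P) := {ε | ∀ᵐ ω ∂P, 0 < ε ω}

/-- The equivalence class `Ĩ_A` of the indicator function of a measurable set `A`. -/
noncomputable def indL0 (P : Measure Ω) (A : Set Ω) (hA : MeasurableSet A) : L0 P :=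
  AEEqFun.mk (A.indicator fun _ => (1 : ℝ)) (aestronglyMeasurable_const.indicator hA)

/-- A random metric space (RM space) with base `(Ω,𝓕,P)`. -/
structure RMSpace (P : Measure Ω) (E : Type*) where
  d : E → E → L0 P
  d_nonneg : ∀ p q, ∀ᵐ ω ∂P, 0 ≤ d p q ω
  d_eq_zero_iff : ∀ p q, d p q = 0 ↔ p = q
  d_symm : ∀ p q, d p q = d q p
  d_triangle : ∀ p q r, ∀ᵐ ω ∂P, d p r ω ≤ d p q ω + d q r ω

/-- Convergence in probability `P` of a sequence in `L⁰(𝓕)`, i.e. convergence in the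
`(ε,λ)`-topology of `L⁰(𝓕)` with the random metric `d(p,q) = |p - q|`. -/
def TendstoProb (P : Measure Ω) (r : ℕ → L0 P) (s : L0 P) : Prop :=
  ∀ ε : ℝ, 0 < ε → ∀ lam ∈ Ioo (0 : ℝ) 1, ∃ N : ℕ, ∀ n ≥ N,
    ENNReal.ofReal (1 - lam) < P {ω | |r n ω - s ω| < ε}

namespace RMSpace

variable {P : Measure Ω} {E : Type*} (M : RMSpace P E)

/-- Convergence of a sequence in the `(ε,λ)`-topology of an RM space. -/
def TendstoEL (x : ℕ → E) (a : E) : Prop :=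
  ∀ ε : ℝ, 0 < ε → ∀ lam ∈ Ioo (0 : ℝ) 1, ∃ N : ℕ, ∀ n ≥ N,
    ENNReal.ofReal (1 - lam) < P {ω | M.d (x n) a ω < ε}

/-- Cauchy sequence for the `d_{ε,λ}`-uniformity of an RM space. -/
def CauchySeqEL (x : ℕ → E) : Prop :=
  ∀ ε : ℝ, 0 < ε → ∀ lam ∈ Ioo (0 : ℝ) 1, ∃ N : ℕ, ∀ m ≥ N, ∀ n ≥ N,
    ENNReal.ofReal (1 - lam) < P {ω | M.d (x m) (x n) ω < ε}

/-- `d_{ε,λ}`-completeness of an RM space (the `d_{ε,λ}`-uniformity is metrizable, hence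
completeness is equivalent to sequential completeness). -/
def CompleteEL : Prop := ∀ x : ℕ → E, M.CauchySeqEL x → ∃ a, M.TendstoEL x a

/-- `φ : E → L̄⁰(𝓕)` is `𝒯_{ε,λ}`-lower semicontinuous: its epigraph
`epi(φ) = {(x,r) ∈ E × L⁰ : φ(x) ≤ r}` is closed in
`(E,𝒯_{ε,λ}) × (L⁰(𝓕),𝒯_{ε,λ})` (sequentially; both topologies are metrizable). -/
def LscEL (φ : E → L0e P) : Prop :=
  ∀ (x : ℕ → E) (r : ℕ → L0 P) (a : E) (s : L0 P),
    (∀ n, ∀ᵐ ω ∂P, φ (x n) ω ≤ (r n ω : EReal)) →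
    M.TendstoEL x a → TendstoProb P r s →
    ∀ᵐ ω ∂P, φ a ω ≤ (s ω : EReal)

end RMSpace

/-- `φ` is proper on `G`: `φ(x) > -∞` a.s. for every `x ∈ G`, and `φ(x) < +∞` a.s.
for some `x ∈ G`. -/
def ProperOn {E : Type*} {P : Measure Ω} (φ : E → L0e P) (G : Set E) : Prop :=
  (∀ x ∈ G, ∀ᵐ ω ∂P, ⊥ < φ x ω) ∧ ∃ x ∈ G, ∀ᵐ ω ∂P, φ x ω < ⊤

/-- `φ` is bounded from below on `G` by an element of `L⁰(𝓕)`. -/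
def BddBelowOn {E : Type*} {P : Measure Ω} (φ : E → L0e P) (G : Set E) : Prop :=
  ∃ ξ : L0 P, ∀ x ∈ G, ∀ᵐ ω ∂P, (ξ ω : EReal) ≤ φ x ω

/-- `φ` is bounded from above on `G` by an element of `L⁰(𝓕)`. -/
def BddAboveOn {E : Type*} {P : Measure Ω} (φ : E → L0e P) (G : Set E) : Prop :=
  ∃ ξ : L0 P, ∀ x ∈ G, ∀ᵐ ω ∂P, φ x ω ≤ (ξ ω : EReal)

/-- `η = ⋀ φ(G)`, the infimum of `φ(G)` in the complete lattice `L̄⁰(𝓕)`. -/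
def IsInfOn {E : Type*} {P : Measure Ω} (φ : E → L0e P) (G : Set E) (η : L0e P) : Prop :=
  (∀ x ∈ G, ∀ᵐ ω ∂P, η ω ≤ φ x ω) ∧
    ∀ ζ : L0e P, (∀ x ∈ G, ∀ᵐ ω ∂P, ζ ω ≤ φ x ω) → ∀ᵐ ω ∂P, ζ ω ≤ η ω

/-- `η = ⋁ φ(G)`, the supremum of `φ(G)` in the complete lattice `L̄⁰(𝓕)`. -/
def IsSupOn {E : Type*} {P : Measure Ω} (φ : E → L0e P) (G : Set E) (η : L0e P) : Prop :=
  (∀ x ∈ G, ∀ᵐ ω ∂P, φ x ω ≤ η ω) ∧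
    ∀ ζ : L0e P, (∀ x ∈ G, ∀ᵐ ω ∂P, φ x ω ≤ ζ ω) → ∀ᵐ ω ∂P, η ω ≤ ζ ω

/-- `s = ⋁ g(G)` for an `L⁰(𝓕)`-valued function `g`. -/
def IsSupOnR {E : Type*} {P : Measure Ω} (g : E → L0 P) (G : Set E) (s : L0 P) : Prop :=
  (∀ x ∈ G, ∀ᵐ ω ∂P, g x ω ≤ s ω) ∧
    ∀ c : L0 P, (∀ x ∈ G, ∀ᵐ ω ∂P, g x ω ≤ c ω) → ∀ᵐ ω ∂P, s ω ≤ c ω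

/-- The Cauchy property (for the `d_{ε,λ}`-uniformity of `L⁰(𝓕)`, i.e. the uniformity of
convergence in probability) of the net `{φ(m) : m ∈ M}` indexed by `M` directed by the
order of `X`. -/
def CauchyNetProb {X : Type*} [Preorder X] {P : Measure Ω} (φ : X → L0e P) (M : Set X) : Prop :=
  ∀ ε : ℝ, 0 < ε → ∀ lam ∈ Ioo (0 : ℝ) 1, ∃ m₀ ∈ M, ∀ m₁ ∈ M, ∀ m₂ ∈ M,
    m₀ ≤ m₁ → m₀ ≤ m₂ →
      ENNReal.ofReal (1 - lam) < P {ω | |(φ m₁ ω).toReal - (φ m₂ ω).toReal| < ε}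

/-- The section filter of the net `{x_g : g ∈ G}`, `x_g = g`, indexed by `G` directed by the
order of `X`; the net is Cauchy iff this filter is a Cauchy filter. -/
def netFilter {X : Type*} [Preorder X] (G : Set X) : Filter X :=
  ⨅ g ∈ G, 𝓟 {y | y ∈ G ∧ g ≤ y}

/-- A random normed module (RN module) over `ℝ` with base `(Ω,𝓕,P)`: a left module `E`
over the algebra `L⁰(𝓕)` together with an `L⁰`-norm. -/
structure RNModule (P : Measure Ω) (E : Type*) [AddCommGroup E] where
  smul : L0 P → E → E
  one_smul : ∀ x, smul 1 x = x
  mul_smul : ∀ ξ η x, smul (ξ * η) x = smul ξ (smul η x)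
  smul_add : ∀ ξ x y, smul ξ (x + y) = smul ξ x + smul ξ y
  add_smul : ∀ ξ η x, smul (ξ + η) x = smul ξ x + smul η x
  nm : E → L0 P
  nm_nonneg : ∀ x, ∀ᵐ ω ∂P, 0 ≤ nm x ω
  nm_eq_zero_iff : ∀ x, nm x = 0 ↔ x = 0
  nm_smul : ∀ ξ x, ∀ᵐ ω ∂P, nm (smul ξ x) ω = |ξ ω| * nm x ω
  nm_add_le : ∀ x y, ∀ᵐ ω ∂P, nm (x + y) ω ≤ nm x ω + nm y ω

/-- The `𝒯_c`-neighbourhood filter of a point `r` of `L⁰(𝓕)`, with base the closed balls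
`{s : |s - r| ≤ ε}`, `ε ∈ L⁰₊₊`. -/
def cNhdsL0 (P : Measure Ω) (r : L0 P) : Filter (L0 P) :=
  ⨅ ε ∈ L0pp P, 𝓟 {s | ∀ᵐ ω ∂P, |s ω - r ω| ≤ ε ω}

namespace RNModule

variable {P : Measure Ω} {E : Type*} [AddCommGroup E] (N : RNModule P E)

/-- Convergence of sequences in the `(ε,λ)`-topology `𝒯_{ε,λ}` of an RN module. -/
def TendstoEL (x : ℕ → E) (a : E) : Prop :=
  ∀ ε : ℝ, 0 < ε → ∀ lam ∈ Ioo (0 : ℝ) 1, ∃ N' : ℕ, ∀ n ≥ N',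
    ENNReal.ofReal (1 - lam) < P {ω | N.nm (x n - a) ω < ε}

/-- Cauchy sequence for the `d_{ε,λ}`-uniformity of an RN module. -/
def CauchySeqEL (x : ℕ → E) : Prop :=
  ∀ ε : ℝ, 0 < ε → ∀ lam ∈ Ioo (0 : ℝ) 1, ∃ N' : ℕ, ∀ m ≥ N', ∀ n ≥ N',
    ENNReal.ofReal (1 - lam) < P {ω | N.nm (x m - x n) ω < ε}

/-- `𝒯_{ε,λ}`-completeness (the `d_{ε,λ}`-uniformity is metrizable, hence completeness is
equivalent to sequential completeness). -/
def CompleteEL : Prop := ∀ x : ℕ → E, N.CauchySeqEL x → ∃ a, N.TendstoEL x a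

/-- `G` is `𝒯_{ε,λ}`-closed (sequentially; `𝒯_{ε,λ}` is metrizable). -/
def ClosedEL (G : Set E) : Prop :=
  ∀ (x : ℕ → E) (a : E), (∀ n, x n ∈ G) → N.TendstoEL x a → a ∈ G

/-- `φ : G → L̄⁰(𝓕)` is `𝒯_{ε,λ}`-lower semicontinuous on `G`: its epigraph
`{(x,r) ∈ G × L⁰ : φ(x) ≤ r}` is closed in `(G,𝒯_{ε,λ}) × (L⁰(𝓕),𝒯_{ε,λ})`. -/
def LscELOn (φ : E → L0e P) (G : Set E) : Prop :=
  ∀ (x : ℕ → E) (r : ℕ → L0 P) (a : E) (s : L0 P),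
    (∀ n, x n ∈ G) → a ∈ G →
    (∀ n, ∀ᵐ ω ∂P, φ (x n) ω ≤ (r n ω : EReal)) →
    N.TendstoEL x a → TendstoProb P r s →
    ∀ᵐ ω ∂P, φ a ω ≤ (s ω : EReal)

/-- The neighbourhood filter of `x` in the locally `L⁰`-convex topology `𝒯_c`,
whose base consists of the closed balls `{y : ‖y - x‖ ≤ ε}`, `ε ∈ L⁰₊₊`. -/
def cNhds (x : E) : Filter E :=
  ⨅ ε ∈ L0pp P, 𝓟 {y | ∀ᵐ ω ∂P, N.nm (y - x) ω ≤ ε ω}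

/-- The `d_c`-uniformity of an RN module, with base `{U(ε) : ε ∈ L⁰₊₊}`,
`U(ε) = {(p,q) : ‖p - q‖ ≤ ε}`. -/
def cUniformity : Filter (E × E) :=
  ⨅ ε ∈ L0pp P, 𝓟 {p | ∀ᵐ ω ∂P, N.nm (p.1 - p.2) ω ≤ ε ω}

/-- `𝒯_c`-completeness: every Cauchy filter for the `d_c`-uniformity converges. -/
def cComplete : Prop :=
  ∀ F : Filter E, F.NeBot → F ×ˢ F ≤ N.cUniformity → ∃ x, F ≤ N.cNhds x

/-- The `𝒯_c`-closure of a subset. -/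
def cClosure (G : Set E) : Set E := {x | (N.cNhds x ⊓ 𝓟 G).NeBot}

/-- `G` is `𝒯_c`-closed. -/
def cClosed (G : Set E) : Prop := ∀ x, x ∈ N.cClosure G → x ∈ G

/-- `S` is `𝒯_c`-dense in `T`. -/
def cDenseIn (S T : Set E) : Prop := ∀ x ∈ T, x ∈ N.cClosure S

/-- The `𝒯_c`-boundary `∂_c G`. -/
def cBoundary (G : Set E) : Set E := N.cClosure G ∩ N.cClosure Gᶜ

/-- `φ : G → L̄⁰(𝓕)` is `𝒯_c`-lower semicontinuous on `G`: its epigraph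
`{(x,r) ∈ G × L⁰ : φ(x) ≤ r}` is closed in `(G,𝒯_c) × (L⁰(𝓕),𝒯_c)`. -/
def cLscOn (φ : E → L0e P) (G : Set E) : Prop :=
  ∀ (a : E) (s : L0 P), a ∈ G →
    ((N.cNhds a ×ˢ cNhdsL0 P s) ⊓
      𝓟 {p : E × L0 P | p.1 ∈ G ∧ ∀ᵐ ω ∂P, φ p.1 ω ≤ (p.2 ω : EReal)}).NeBot →
    ∀ᵐ ω ∂P, φ a ω ≤ (s ω : EReal)

/-- The countable concatenation property of a subset `G` of an RN module. -/
def HasCC (G : Set E) : Prop :=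
  ∀ (x : ℕ → E), (∀ n, x n ∈ G) →
    ∀ (A : ℕ → Set Ω) (hA : ∀ n, MeasurableSet (A n)),
      (∀ i j, i ≠ j → Disjoint (A i) (A j)) → (⋃ n, A n) = univ →
        ∃ y ∈ G, ∀ n, N.smul (indL0 P (A n) (hA n)) y = N.smul (indL0 P (A n) (hA n)) (x n)

/-- The countable concatenation property of a subset of the product `L⁰(𝓕)`-module
`E × L⁰(𝓕)` (with componentwise module operations). -/
def HasCCProd (G : Set (E × L0 P)) : Prop :=
  ∀ (p : ℕ → E × L0 P), (∀ n, p n ∈ G) →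
    ∀ (A : ℕ → Set Ω) (hA : ∀ n, MeasurableSet (A n)),
      (∀ i j, i ≠ j → Disjoint (A i) (A j)) → (⋃ n, A n) = univ →
        ∃ q ∈ G, ∀ n,
          N.smul (indL0 P (A n) (hA n)) q.1 = N.smul (indL0 P (A n) (hA n)) (p n).1 ∧
          indL0 P (A n) (hA n) * q.2 = indL0 P (A n) (hA n) * (p n).2

/-- The local property of an `L̄⁰(𝓕)`-valued function:
`Ĩ_A·φ(x) = Ĩ_A·φ(Ĩ_A·x)` for all `x ∈ E`, `A ∈ 𝓕`, i.e. `φ(x) = φ(Ĩ_A x)` a.s. on `A`. -/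
def LocalProp (φ : E → L0e P) : Prop :=
  ∀ (x : E) (A : Set Ω) (hA : MeasurableSet A),
    ∀ᵐ ω ∂P, ω ∈ A → φ x ω = φ (N.smul (indL0 P A hA) x) ω

/-- `G` is `L⁰(𝓕)`-convex. -/
def L0Convex (G : Set E) : Prop :=
  ∀ x ∈ G, ∀ y ∈ G, ∀ ξ η : L0 P,
    (∀ᵐ ω ∂P, 0 ≤ ξ ω) → (∀ᵐ ω ∂P, 0 ≤ η ω) → ξ + η = 1 →
      N.smul ξ x + N.smul η y ∈ G

/-- `G` is a.s. bounded: `⋁{‖p‖ : p ∈ G} ∈ L⁰₊(𝓕)`. -/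
def ASBounded (G : Set E) : Prop :=
  ∃ ξ : L0 P, ∀ p ∈ G, ∀ᵐ ω ∂P, N.nm p ω ≤ ξ ω

/-- Membership in the random conjugate space `E*`: `f` is an a.s. bounded random linear
functional, i.e. an `L⁰(𝓕)`-linear map `f : E → L⁰(𝓕)` with `|f(x)| ≤ ξ·‖x‖` for all `x`
for some `ξ ∈ L⁰₊(𝓕)`. -/
def IsDual (f : E → L0 P) : Prop :=
  (∀ x y, f (x + y) = f x + f y) ∧
  (∀ (ξ : L0 P) (x : E), f (N.smul ξ x) = ξ * f x) ∧
  ∃ ξ : L0 P, (∀ᵐ ω ∂P, 0 ≤ ξ ω) ∧ ∀ x, ∀ᵐ ω ∂P, |f x ω| ≤ ξ ω * N.nm x ω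

/-- `nf = ‖f‖* := ⋀{ξ ∈ L⁰₊ : |f(x)| ≤ ξ‖x‖ for all x ∈ E}`, the random norm of `E*`. -/
def IsDualNorm (f : E → L0 P) (nf : L0 P) : Prop :=
  (∀ ξ : L0 P, ((∀ᵐ ω ∂P, 0 ≤ ξ ω) ∧ ∀ x, ∀ᵐ ω ∂P, |f x ω| ≤ ξ ω * N.nm x ω) →
    ∀ᵐ ω ∂P, nf ω ≤ ξ ω) ∧
  (∀ c : L0 P,
    (∀ ξ : L0 P, ((∀ᵐ ω ∂P, 0 ≤ ξ ω) ∧ ∀ x, ∀ᵐ ω ∂P, |f x ω| ≤ ξ ω * N.nm x ω) →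
      ∀ᵐ ω ∂P, c ω ≤ ξ ω) → ∀ᵐ ω ∂P, c ω ≤ nf ω)

/-- The cone `K(f,k) = {y ∈ E : k‖y‖ ≤ f(y)}`. -/
def Kcone (f : E → L0 P) (k : L0 P) : Set E := {y | ∀ᵐ ω ∂P, k ω * N.nm y ω ≤ f y ω}

/-- `f ∈ E*∖{0}`, bounded from above on `G`, supports `G` at some point:
`f(x) = ⋁f(G)` for some `x ∈ G`. -/
def Supports (G : Set E) (f : E → L0 P) : Prop :=
  N.IsDual f ∧ f ≠ 0 ∧ (∃ ξ : L0 P, ∀ x ∈ G, ∀ᵐ ω ∂P, f x ω ≤ ξ ω) ∧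
    ∃ x ∈ G, IsSupOnR f G (f x)

/-- The set of support points of `G`: points `x ∈ G` at which some
`f ∈ E*∖{0}`, bounded from above on `G`, attains `f(x) = ⋁f(G)`. -/
def SupportPoints (G : Set E) : Set E :=
  {x | x ∈ G ∧ ∃ f : E → L0 P, N.IsDual f ∧ f ≠ 0 ∧
    (∃ ξ : L0 P, ∀ y ∈ G, ∀ᵐ ω ∂P, f y ω ≤ ξ ω) ∧ IsSupOnR f G (f x)}

end RNModule



/-- A bounded strictly monotone measurable function `EReal → ℝ`. -/
noncomputable def hfun : EReal → ℝ := fun t =>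
  if t = ⊥ then -2 else if t = ⊤ then 2 else Real.arctan t.toReal

lemma hfun_coe (x : ℝ) : hfun (x : EReal) = Real.arctan x := by
  simp [hfun, EReal.coe_ne_bot, EReal.coe_ne_top]

lemma arctan_lt_two (x : ℝ) : Real.arctan x < 2 :=
  lt_of_lt_of_le (Real.arctan_lt_pi_div_two x) (by nlinarith [Real.pi_le_four])

lemma neg_two_lt_arctan (x : ℝ) : -2 < Real.arctan x := by
  have := Real.neg_pi_div_two_lt_arctan x
  nlinarith [Real.pi_le_four]

lemma hfun_abs_le (t : EReal) : |hfun t| ≤ 2 := by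
  induction t using EReal.rec with
  | bot => simp [hfun]
  | coe x => rw [hfun_coe, abs_le]; exact ⟨(neg_two_lt_arctan x).le, (arctan_lt_two x).le⟩
  | top => simp [hfun]

lemma hfun_strictMono : StrictMono hfun := by
  intro a b hab
  induction a using EReal.rec with
  | bot =>
    induction b using EReal.rec with
    | bot => exact absurd hab (lt_irrefl _)
    | coe x => simpa [hfun] using neg_two_lt_arctan x
    | top => norm_num [hfun]
  | coe x =>
    induction b using EReal.rec with
    | bot => exact absurd hab (by simp)
    | coe y =>
      rw [hfun_coe, hfun_coe]
      exact Real.arctan_strictMono (EReal.coe_lt_coe_iff.mp hab)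
    | top => simpa [hfun, hfun_coe] using arctan_lt_two x
  | top => exact absurd hab (by simp)

lemma hfun_measurable : Measurable hfun := by
  unfold hfun
  exact Measurable.ite measurableSet_eq measurable_const
    (Measurable.ite measurableSet_eq measurable_const
      (Real.measurable_arctan.comp measurable_ereal_toReal))


theorem key
    {Ω : Type*} [MeasurableSpace Ω] {P : Measure Ω} [IsProbabilityMeasure P]
    {E : Type*} [AddCommGroup E] (N : RNModule P E)
    (G : Set E) (hCC : N.HasCC G)
    (f : E → L0e P) (hloc : N.LocalProp f)
    (x₀ : E) (hx₀G : x₀ ∈ G) (hx₀ : ∀ᵐ ω ∂P, f x₀ ω < ⊤)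
    (hbdd : BddBelowOn f G)
    (ε : L0 P) (hε : ε ∈ L0pp P) (η : L0e P) (hη : IsInfOn f G η) :
    ∃ x ∈ G, ∀ᵐ ω ∂P, f x ω ≤ η ω + (ε ω : EReal) := by
  classical
  -- measurable representatives
  set rep : E → Ω → EReal := fun x => (f x).aemeasurable.mk _ with hrep_def
  have hrep_meas : ∀ x, Measurable (rep x) := fun x => (f x).aemeasurable.measurable_mk
  have hrep_ae : ∀ x, ⇑(f x) =ᵐ[P] rep x := fun x => (f x).aemeasurable.ae_eq_mk
  set I : (ℕ → E) → Ω → EReal := fun x ω => ⨅ n, rep (x n) ω with hI_def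
  have hI_meas : ∀ x : ℕ → E, Measurable (I x) :=
    fun x => Measurable.iInf (fun n => hrep_meas (x n))
  have hInt : ∀ u : Ω → EReal, Measurable u → Integrable (fun ω => hfun (u ω)) P := by
    intro u hu
    refine (integrable_const (2 : ℝ)).mono'
      ((hfun_measurable.comp hu)).aestronglyMeasurable ?_
    exact Eventually.of_forall fun ω => by simpa using hfun_abs_le (u ω)
  set F : (ℕ → E) → ℝ := fun x => ∫ ω, hfun (I x ω) ∂P with hF_def
  have hFmono : ∀ x y : ℕ → E, (∀ ω, I x ω ≤ I y ω) → F x ≤ F y := by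
    intro x y h
    exact integral_mono (hInt _ (hI_meas x)) (hInt _ (hI_meas y))
      (fun ω => hfun_strictMono.monotone (h ω))
  set S : Set ℝ := {r | ∃ x : ℕ → E, (∀ n, x n ∈ G) ∧ F x = r} with hS_def
  have hS_ne : S.Nonempty := ⟨F (fun _ => x₀), fun _ => x₀, fun _ => hx₀G, rfl⟩
  have hF_lb : ∀ x : ℕ → E, -2 ≤ F x := by
    intro x
    have : (-2 : ℝ) = ∫ _ω, (-2 : ℝ) ∂P := by simp
    rw [this]
    exact integral_mono (integrable_const _) (hInt _ (hI_meas x))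
      (fun ω => (abs_le.mp (hfun_abs_le (I x ω))).1)
  have hS_bdd : BddBelow S := ⟨-2, by rintro r ⟨x, -, rfl⟩; exact hF_lb x⟩
  set c : ℝ := sInf S with hc_def
  have hc_le : ∀ x : ℕ → E, (∀ n, x n ∈ G) → c ≤ F x :=
    fun x hx => csInf_le hS_bdd ⟨x, hx, rfl⟩
  have hseq : ∀ k : ℕ, ∃ x : ℕ → E, (∀ n, x n ∈ G) ∧ F x < c + 1 / (k + 1) := by
    intro k
    obtain ⟨r, ⟨x, hx, hr⟩, hlt⟩ := Real.lt_sInf_add_pos hS_ne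
      (by positivity : (0 : ℝ) < 1 / (k + 1))
    exact ⟨x, hx, hr ▸ hlt⟩
  choose xs hxsG hxsF using hseq
  set y : ℕ → E := fun n => xs (Nat.pairEquiv.symm n).1 (Nat.pairEquiv.symm n).2 with hy_def
  have hyG : ∀ n, y n ∈ G := fun n => hxsG _ _
  have hIy_le : ∀ k ω, I y ω ≤ I (xs k) ω := by
    intro k ω
    refine le_iInf fun m => ?_
    have h1 : rep (y (Nat.pairEquiv (k, m))) ω = rep (xs k m) ω := by
      simp [hy_def]
    exact (iInf_le (fun n => rep (y n) ω) (Nat.pairEquiv (k, m))).trans h1.le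
  have hFy : F y = c := by
    refine le_antisymm ?_ (hc_le y hyG)
    refine le_of_forall_pos_le_add fun δ hδ => ?_
    obtain ⟨k, hk⟩ := exists_nat_one_div_lt hδ
    calc F y ≤ F (xs k) := hFmono _ _ (hIy_le k)
      _ ≤ c + 1 / (k + 1) := (hxsF k).le
      _ ≤ c + δ := by linarith
  -- I y is a.e. below every rep x, x ∈ G
  have hbound : ∀ x ∈ G, ∀ᵐ ω ∂P, I y ω ≤ rep x ω := by
    intro x hxG
    set w : ℕ → E := fun n => Nat.casesOn n x y with hw_def
    have hwG : ∀ n, w n ∈ G := by rintro (_ | n); exacts [hxG, hyG n]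
    have hIw : ∀ ω, I w ω = min (rep x ω) (I y ω) := by
      intro ω
      refine le_antisymm (le_min (iInf_le (fun n => rep (w n) ω) 0)
        (le_iInf fun m => iInf_le (fun n => rep (w n) ω) (m + 1))) ?_
      refine le_iInf fun n => ?_
      cases n with
      | zero => exact min_le_left _ _
      | succ m => exact (min_le_right _ _).trans (iInf_le (fun n => rep (y n) ω) m)
    have hFw_le : F w ≤ F y := hFmono _ _ (fun ω => (hIw ω) ▸ min_le_right _ _)
    have hFw : F w = c := le_antisymm (hFw_le.trans_eq hFy) (hc_le w hwG)
    have hdiff : ∫ ω, (hfun (I y ω) - hfun (I w ω)) ∂P = 0 := by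
      rw [integral_sub (hInt _ (hI_meas y)) (hInt _ (hI_meas w))]
      show F y - F w = 0
      rw [hFy, hFw, sub_self]
    have h0 : (fun ω => hfun (I y ω) - hfun (I w ω)) =ᵐ[P] 0 := by
      refine (integral_eq_zero_iff_of_nonneg ?_
        ((hInt _ (hI_meas y)).sub (hInt _ (hI_meas w)))).mp hdiff
      intro ω
      have : I w ω ≤ I y ω := (hIw ω) ▸ min_le_right _ _
      simpa using hfun_strictMono.monotone this
    filter_upwards [h0] with ω hω
    have heq : hfun (I y ω) = hfun (I w ω) := by
      have : hfun (I y ω) - hfun (I w ω) = 0 := hω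
      linarith
    have : I y ω = I w ω := hfun_strictMono.injective heq
    calc I y ω = I w ω := this
      _ = min (rep x ω) (I y ω) := hIw ω
      _ ≤ rep x ω := min_le_left _ _
  -- I y a.e. equals η from below
  set ζL : L0e P := AEEqFun.mk (I y) (hI_meas y).aemeasurable.aestronglyMeasurable with hζL_def
  have hζ : ⇑ζL =ᵐ[P] I y := AEEqFun.coeFn_mk _ _
  have hζη : ∀ᵐ ω ∂P, I y ω ≤ η ω := by
    have hlb : ∀ x ∈ G, ∀ᵐ ω ∂P, ζL ω ≤ f x ω := by
      intro x hx
      filter_upwards [hζ, hbound x hx, hrep_ae x] with ω h1 h2 h3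
      rw [h1, h3]; exact h2
    filter_upwards [hη.2 ζL hlb, hζ] with ω h1 h2
    rw [← h2]; exact h1
  -- η is a.e. real
  have hηtop : ∀ᵐ ω ∂P, η ω < ⊤ := by
    filter_upwards [hη.1 x₀ hx₀G, hx₀] with ω h1 h2 using lt_of_le_of_lt h1 h2
  obtain ⟨ξ, hξ⟩ := hbdd
  have hηbot : ∀ᵐ ω ∂P, (⊥ : EReal) < η ω := by
    set ξe : L0e P := AEEqFun.comp _ continuous_coe_real_ereal ξ with hξe_def
    have hξec : ⇑ξe =ᵐ[P] fun ω => ((ξ ω : ℝ) : EReal) := AEEqFun.coeFn_comp _ _ _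
    have h1 : ∀ x ∈ G, ∀ᵐ ω ∂P, ξe ω ≤ f x ω := by
      intro x hx
      filter_upwards [hξ x hx, hξec] with ω ha hb
      rw [hb]; exact ha
    filter_upwards [hη.2 ξe h1, hξec] with ω ha hb
    exact lt_of_lt_of_le (hb ▸ EReal.bot_lt_coe (ξ ω)) ha
  -- measurable representatives of η and ε
  set ηm : Ω → EReal := η.aemeasurable.mk _ with hηm_def
  have hηm_meas : Measurable ηm := η.aemeasurable.measurable_mk
  have hηm_ae : ⇑η =ᵐ[P] ηm := η.aemeasurable.ae_eq_mk
  set εm : Ω → ℝ := ε.aemeasurable.mk _ with hεm_def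
  have hεm_meas : Measurable εm := ε.aemeasurable.measurable_mk
  have hεm_ae : ⇑ε =ᵐ[P] εm := ε.aemeasurable.ae_eq_mk
  set B : ℕ → Set Ω := fun n => {ω | rep (y n) ω ≤ (((ηm ω).toReal + εm ω : ℝ) : EReal)}
    with hB_def
  have hB_meas : ∀ n, MeasurableSet (B n) := by
    intro n
    exact measurableSet_le (hrep_meas (y n))
      (measurable_coe_real_ereal.comp
        ((measurable_ereal_toReal.comp hηm_meas).add hεm_meas))
  have hBae : ∀ᵐ ω ∂P, ω ∈ ⋃ n, B n := by
    filter_upwards [hζη, hηtop, hηbot, hηm_ae, hεm_ae, hε] with ω h1 h2 h3 h4 h5 h6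
    have hne_top : ηm ω ≠ ⊤ := h4 ▸ h2.ne
    have hne_bot : ηm ω ≠ ⊥ := h4 ▸ h3.ne'
    have hηr : η ω = ((ηm ω).toReal : EReal) := by
      rw [h4, EReal.coe_toReal hne_top hne_bot]
    have hlt : I y ω < (((ηm ω).toReal + εm ω : ℝ) : EReal) := by
      refine lt_of_le_of_lt (h1.trans_eq hηr) ?_
      rw [EReal.coe_lt_coe_iff]
      have : 0 < εm ω := h5 ▸ h6
      linarith
    obtain ⟨n, hn⟩ := iInf_lt_iff.mp hlt
    exact mem_iUnion.mpr ⟨n, hn.le⟩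
  -- partition
  set D : Set Ω := (⋃ n, B n)ᶜ with hD_def
  set C : ℕ → Set Ω := fun n => B n ∪ D with hC_def
  have hC_meas : ∀ n, MeasurableSet (C n) :=
    fun n => (hB_meas n).union (MeasurableSet.iUnion hB_meas).compl
  have hC_univ : (⋃ n, C n) = univ := by
    apply eq_univ_of_forall
    intro ω
    by_cases h : ω ∈ ⋃ n, B n
    · obtain ⟨n, hn⟩ := mem_iUnion.mp h
      exact mem_iUnion.mpr ⟨n, Or.inl hn⟩
    · exact mem_iUnion.mpr ⟨0, Or.inr h⟩
  set A : ℕ → Set Ω := disjointed C with hA_def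
  have hA_meas : ∀ n, MeasurableSet (A n) := MeasurableSet.disjointed hC_meas
  have hA_disj : ∀ i j, i ≠ j → Disjoint (A i) (A j) :=
    fun i j hij => disjoint_disjointed C hij
  have hA_univ : (⋃ n, A n) = univ := by
    rw [hA_def, iUnion_disjointed]; exact hC_univ
  obtain ⟨z, hzG, hz⟩ := hCC y hyG A hA_meas hA_disj hA_univ
  refine ⟨z, hzG, ?_⟩
  have hloc1 : ∀ᵐ ω ∂P, ∀ n, ω ∈ A n →
      f z ω = f (N.smul (indL0 P (A n) (hA_meas n)) z) ω :=
    ae_all_iff.mpr fun n => hloc z (A n) (hA_meas n)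
  have hloc2 : ∀ᵐ ω ∂P, ∀ n, ω ∈ A n →
      f (y n) ω = f (N.smul (indL0 P (A n) (hA_meas n)) (y n)) ω :=
    ae_all_iff.mpr fun n => hloc (y n) (A n) (hA_meas n)
  have hrepall : ∀ᵐ ω ∂P, ∀ n, f (y n) ω = rep (y n) ω :=
    ae_all_iff.mpr fun n => hrep_ae (y n)
  filter_upwards [hloc1, hloc2, hrepall, hBae, hηm_ae, hεm_ae, hηtop, hηbot]
    with ω H1 H2 H3 H4 H5 H6 H7 H8
  obtain ⟨n, hn⟩ := mem_iUnion.mp (hA_univ ▸ mem_univ ω)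
  have hωC : ω ∈ C n := disjointed_subset C n hn
  have hωB : ω ∈ B n := by
    rcases hωC with h | h
    · exact h
    · exact absurd H4 h
  have hne_top : ηm ω ≠ ⊤ := H5 ▸ H7.ne
  have hne_bot : ηm ω ≠ ⊥ := H5 ▸ H8.ne'
  calc f z ω = f (N.smul (indL0 P (A n) (hA_meas n)) z) ω := H1 n hn
    _ = f (N.smul (indL0 P (A n) (hA_meas n)) (y n)) ω := by rw [hz n]
    _ = f (y n) ω := (H2 n hn).symm
    _ = rep (y n) ω := H3 n
    _ ≤ (((ηm ω).toReal + εm ω : ℝ) : EReal) := hωB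
    _ = η ω + (ε ω : EReal) := by
        rw [EReal.coe_add, EReal.coe_toReal hne_top hne_bot, ← H5, ← H6]

/-- Theorem 3.5. If `G` has the countable concatenation property, `f` has
the local property and `f|_G` is proper and bounded from below (resp. from above) on `G`,
then for each `ε ∈ L⁰₊₊` there is `x_ε ∈ G` with `f(x_ε) ≤ ⋀f(G) + ε`
(resp. `f(x_ε) ≥ ⋁f(G) - ε`). -/
theorem approx_inf_and_sup
    {Ω : Type*} [MeasurableSpace Ω] {P : Measure Ω} [IsProbabilityMeasure P]
    {E : Type*} [AddCommGroup E] (N : RNModule P E)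
    (G : Set E) (hCC : N.HasCC G)
    (f : E → L0e P) (hloc : N.LocalProp f) (hproper : ProperOn f G) :
    (BddBelowOn f G → ∀ ε ∈ L0pp P, ∀ η : L0e P, IsInfOn f G η →
      ∃ x ∈ G, ∀ᵐ ω ∂P, f x ω ≤ η ω + (ε ω : EReal)) ∧
    (BddAboveOn f G → ∀ ε ∈ L0pp P, ∀ η : L0e P, IsSupOn f G η →
      ∃ x ∈ G, ∀ᵐ ω ∂P, η ω - (ε ω : EReal) ≤ f x ω) := by
  classical
  obtain ⟨hpb, x₁, hx₁G, hx₁⟩ := hproper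
  constructor
  · intro hbdd ε hε η hη
    exact key N G hCC f hloc x₁ hx₁G hx₁ hbdd ε hε η hη
  · intro hbdd ε hε η hη
    obtain ⟨ξ, hξ⟩ := hbdd
    set f' : E → L0e P := fun x => AEEqFun.comp (fun t : EReal => -t) continuous_neg (f x)
      with hf'_def
    have hcoe : ∀ u : L0e P,
        ⇑(AEEqFun.comp (fun t : EReal => -t) continuous_neg u) =ᵐ[P] fun ω => -(u ω) :=
      fun u => AEEqFun.coeFn_comp _ _ _
    have hcoe' : ∀ x : E, ⇑(f' x) =ᵐ[P] fun ω => -(f x ω) := fun x => hcoe (f x)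
    have hloc' : N.LocalProp f' := by
      intro x A hA
      filter_upwards [hloc x A hA, hcoe' x, hcoe' (N.smul (indL0 P A hA) x)]
        with ω h1 h2 h3 hω
      rw [h2, h3]
      simp only [h1 hω]
    have hη' : IsInfOn f' G (AEEqFun.comp (fun t : EReal => -t) continuous_neg η) := by
      constructor
      · intro x hx
        filter_upwards [hη.1 x hx, hcoe η, hcoe' x] with ω h1 h2 h3
        rw [h2, h3]
        exact EReal.neg_le_neg_iff.mpr h1
      · intro ζ hζ
        have hupper : ∀ x ∈ G, ∀ᵐ ω ∂P,
            f x ω ≤ (AEEqFun.comp (fun t : EReal => -t) continuous_neg ζ) ω := by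
          intro x hx
          filter_upwards [hζ x hx, hcoe ζ, hcoe' x] with ω h1 h2 h3
          rw [h3] at h1
          rw [h2]
          exact EReal.le_neg_of_le_neg h1
        filter_upwards [hη.2 _ hupper, hcoe ζ, hcoe η] with ω h1 h2 h3
        rw [h2] at h1
        rw [h3]
        exact EReal.le_neg_of_le_neg h1
    have hx₁' : ∀ᵐ ω ∂P, f' x₁ ω < ⊤ := by
      filter_upwards [hpb x₁ hx₁G, hcoe' x₁] with ω h1 h2
      rw [h2]
      have := EReal.neg_lt_neg_iff.mpr h1
      simpa using this
    have hbdd' : BddBelowOn f' G := by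
      refine ⟨-ξ, fun x hx => ?_⟩
      filter_upwards [hξ x hx, hcoe' x, AEEqFun.coeFn_neg ξ] with ω h1 h2 h3
      rw [h2, h3]
      show ((-(ξ ω) : ℝ) : EReal) ≤ -(f x ω)
      rw [EReal.coe_neg]
      exact EReal.neg_le_neg_iff.mpr h1
    obtain ⟨x, hxG, hx⟩ := key N G hCC f' hloc' x₁ hx₁G hx₁' hbdd' ε hε _ hη'
    have hηbot : ∀ᵐ ω ∂P, (⊥ : EReal) < η ω := by
      filter_upwards [hη.1 x₁ hx₁G, hpb x₁ hx₁G] with ω h1 h2 using lt_of_lt_of_le h2 h1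
    have hηtop : ∀ᵐ ω ∂P, η ω < ⊤ := by
      have hξec : ⇑(AEEqFun.comp _ continuous_coe_real_ereal ξ) =ᵐ[P]
          fun ω => ((ξ ω : ℝ) : EReal) := AEEqFun.coeFn_comp _ _ _
      have h1 : ∀ x ∈ G, ∀ᵐ ω ∂P,
          f x ω ≤ (AEEqFun.comp _ continuous_coe_real_ereal ξ) ω := by
        intro x hx
        filter_upwards [hξ x hx, hξec] with ω ha hb
        rw [hb]; exact ha
      filter_upwards [hη.2 _ h1, hξec] with ω ha hb
      rw [hb] at ha
      exact lt_of_le_of_lt ha (EReal.coe_lt_top _)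
    refine ⟨x, hxG, ?_⟩
    filter_upwards [hx, hcoe' x, hcoe η, hηbot, hηtop] with ω h1 h2 h3 h4 h5
    rw [h2, h3] at h1
    obtain ⟨r, hr⟩ : ∃ r : ℝ, η ω = (r : EReal) :=
      ⟨(η ω).toReal, (EReal.coe_toReal h5.ne h4.ne').symm⟩
    rw [hr] at h1 ⊢
    have h1' : -(f x ω) ≤ ((-r + ε ω : ℝ) : EReal) := by
      rw [EReal.coe_add, EReal.coe_neg]; exact h1
    have h2' := EReal.neg_le.mp h1'
    calc (r : EReal) - (ε ω : EReal) = ((r - ε ω : ℝ) : EReal) := (EReal.coe_sub _ _).symm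
      _ = -((-r + ε ω : ℝ) : EReal) := by
          rw [show (-r + ε ω : ℝ) = -(r - ε ω) by ring, EReal.coe_neg, neg_neg]
      _ ≤ f x ω := h2'


end GYY
end

section
/- Precise Ekeland's variational principle under 𝒯_c: Let (E,‖·‖) be a 𝒯_c-complete RN module over ℝ with base (Ω,𝓕,P) such that E has the countable concatenation property, ε ∈ L⁰₊₊(𝓕), and φ : E → L̄⁰(𝓕) a function with the local property. If G ⊆ E is a 𝒯_c-closed subset with the countable concatenation property and the restriction of φ to G is proper, 𝒯_c-lower semicontinuous and bounded from below on G, then for each point x₀ ∈ G satisfying φ(x₀) ≤ ⋀φ(G) + ε and each α ∈ L⁰₊₊(𝓕), there exists z ∈ G such that: (1) φ(z) ≤ φ(x₀) − α·‖z−x₀‖; (2) ‖z−x₀‖ ≤ α⁻¹·ε; (3) for each x ∈ G with x ≠ z, φ(x) ≰ φ(z) − α·‖x−z‖ (i.e. there exists A ∈ 𝓕 with P(A) > 0 such that φ(x) > φ(z) − α·‖x−z‖ a.s. on A). -/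
open MeasureTheory ENNReal Set Filter

namespace GYY

variable {Ω : Type*} [MeasurableSpace Ω]

/-! ### Auxiliary development for the proof -/

section EkelandAux

variable {Ω : Type*} [MeasurableSpace Ω] {P : Measure Ω} [IsProbabilityMeasure P]
  {E : Type*} [AddCommGroup E] (N : RNModule P E)

lemma coeFn_indL0 (A : Set Ω) (hA : MeasurableSet A) :
    (indL0 P A hA : Ω → ℝ) =ᵐ[P] A.indicator (fun _ => (1:ℝ)) :=
  MeasureTheory.AEEqFun.coeFn_mk _ _

namespace RNModule

lemma zero_smul' (x : E) : N.smul 0 x = 0 := by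
  have h := N.add_smul 0 0 x
  rw [add_zero] at h
  have := add_right_cancel (a := N.smul 0 x) (b := N.smul 0 x) (c := 0)
  exact this (by rw [zero_add]; exact h.symm)

lemma neg_one_smul' (x : E) : N.smul (-1) x = -x := by
  have h := N.add_smul 1 (-1) x
  rw [add_neg_cancel, N.zero_smul', N.one_smul] at h
  exact (neg_eq_of_add_eq_zero_right h.symm).symm

lemma smul_neg' (ξ : L0 P) (x : E) : N.smul ξ (-x) = -N.smul ξ x := by
  have : N.smul ξ (-x) = N.smul ξ (N.smul (-1) x) := by rw [N.neg_one_smul']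
  rw [this, ← N.mul_smul, mul_comm, N.mul_smul, N.neg_one_smul']

lemma smul_sub' (ξ : L0 P) (x y : E) :
    N.smul ξ (x - y) = N.smul ξ x - N.smul ξ y := by
  rw [sub_eq_add_neg, N.smul_add, N.smul_neg', sub_eq_add_neg]

lemma nm_zero' : N.nm (0 : E) = 0 := (N.nm_eq_zero_iff 0).2 rfl

lemma nm_neg' (x : E) : ∀ᵐ ω ∂P, N.nm (-x) ω = N.nm x ω := by
  have h := N.nm_smul (-1) x
  have h1 : ((-1 : L0 P) : Ω → ℝ) =ᵐ[P] fun _ => (-1 : ℝ) := by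
    have := MeasureTheory.AEEqFun.coeFn_neg (1 : L0 P)
    filter_upwards [this, MeasureTheory.AEEqFun.coeFn_one (β := ℝ) (μ := P)] with ω h1 h2
    rw [h1, Pi.neg_apply, h2, Pi.one_apply]
  rw [N.neg_one_smul'] at h
  filter_upwards [h, h1] with ω h h1
  rw [h, h1]; simp

lemma nm_sub_symm (x y : E) : ∀ᵐ ω ∂P, N.nm (x - y) ω = N.nm (y - x) ω := by
  have := N.nm_neg' (y - x)
  rw [neg_sub] at this
  exact this

lemma nm_ind_smul (A : Set Ω) (hA : MeasurableSet A) (v : E) :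
    ∀ᵐ ω ∂P, N.nm (N.smul (indL0 P A hA) v) ω
      = A.indicator (fun _ => (1:ℝ)) ω * N.nm v ω := by
  filter_upwards [N.nm_smul (indL0 P A hA) v, coeFn_indL0 (P := P) A hA] with ω h h2
  rw [h, h2, abs_of_nonneg (Set.indicator_nonneg (fun _ _ => zero_le_one) ω)]

lemma nm_eq_on_of_ind_eq {A : Set Ω} {hA : MeasurableSet A} {y u : E}
    (h : N.smul (indL0 P A hA) y = N.smul (indL0 P A hA) u) (w : E) :
    ∀ᵐ ω ∂P, ω ∈ A → N.nm (y - w) ω = N.nm (u - w) ω := by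
  have h2 : N.smul (indL0 P A hA) (y - w) = N.smul (indL0 P A hA) (u - w) := by
    rw [N.smul_sub', N.smul_sub', h]
  filter_upwards [N.nm_ind_smul A hA (y - w), N.nm_ind_smul A hA (u - w)] with ω e1 e2 hω
  have e3 : N.nm (N.smul (indL0 P A hA) (y-w)) ω = N.nm (N.smul (indL0 P A hA) (u-w)) ω := by
    rw [h2]
  rw [e1, e2, Set.indicator_of_mem hω] at e3
  simpa using e3

lemma phi_eq_on_of_ind_eq {φ : E → L0e P} (hloc : N.LocalProp φ) {A : Set Ω}
    {hA : MeasurableSet A} {y u : E}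
    (h : N.smul (indL0 P A hA) y = N.smul (indL0 P A hA) u) :
    ∀ᵐ ω ∂P, ω ∈ A → φ y ω = φ u ω := by
  filter_upwards [hloc y A hA, hloc u A hA] with ω h1 h2 hω
  rw [h1 hω, h2 hω, h]

end RNModule

/-- Make a measurable partition of `Ω` out of an a.e.-covering family `C`. -/
def partOf (C : ℕ → Set Ω) : ℕ → Set Ω := fun k =>
  if k = 0 then (C 0 ∪ (⋃ j, C j)ᶜ) else C k \ (⋃ j, ⋃ _ : j < k, C j)

lemma partOf_measurable {C : ℕ → Set Ω} (hC : ∀ k, MeasurableSet (C k)) (k : ℕ) :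
    MeasurableSet (partOf C k) := by
  unfold partOf
  split
  · exact (hC 0).union (MeasurableSet.iUnion hC).compl
  · exact (hC k).diff (MeasurableSet.iUnion fun j => MeasurableSet.iUnion fun _ => hC j)

lemma partOf_disjoint (C : ℕ → Set Ω) :
    ∀ i j, i ≠ j → Disjoint (partOf C i) (partOf C j) := by
  have key : ∀ i j, i < j → Disjoint (partOf C i) (partOf C j) := by
    intro i j hij
    rw [Set.disjoint_left]
    intro a ha hb
    have hj : j ≠ 0 := by omega
    rw [partOf, if_neg hj] at hb
    rcases hb with ⟨hbj, hbn⟩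
    by_cases hi : i = 0
    · subst hi
      rw [partOf, if_pos rfl] at ha
      rcases ha with ha | ha
      · exact hbn (Set.mem_iUnion.2 ⟨0, Set.mem_iUnion.2 ⟨hij, ha⟩⟩)
      · exact ha (Set.mem_iUnion.2 ⟨j, hbj⟩)
    · rw [partOf, if_neg hi] at ha
      exact hbn (Set.mem_iUnion.2 ⟨i, Set.mem_iUnion.2 ⟨hij, ha.1⟩⟩)
  intro i j hij
  rcases hij.lt_or_gt with h | h
  · exact key i j h
  · exact (key j i h).symm

lemma partOf_union (C : ℕ → Set Ω) : (⋃ k, partOf C k) = Set.univ := by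
  ext ω
  simp only [Set.mem_iUnion, Set.mem_univ, iff_true]
  classical
  by_cases h : ∃ k, ω ∈ C k
  · by_cases hk : Nat.find h = 0
    · exact ⟨0, by rw [partOf, if_pos rfl]; exact Or.inl (hk ▸ Nat.find_spec h)⟩
    · refine ⟨Nat.find h, ?_⟩
      rw [partOf, if_neg hk]
      refine ⟨Nat.find_spec h, fun hmem => ?_⟩
      rcases Set.mem_iUnion.1 hmem with ⟨j, hj⟩
      rcases Set.mem_iUnion.1 hj with ⟨hjk, hjC⟩
      exact Nat.find_min h hjk hjC
  · exact ⟨0, by rw [partOf, if_pos rfl]; exact Or.inr (fun hm => h (Set.mem_iUnion.1 hm))⟩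

lemma partOf_ae_subset {C : ℕ → Set Ω} (hae : ∀ᵐ ω ∂P, ∃ k, ω ∈ C k) :
    ∀ᵐ ω ∂P, ∀ k, ω ∈ partOf C k → ω ∈ C k := by
  filter_upwards [hae] with ω hω k hk
  by_cases h0 : k = 0
  · subst h0
    rw [partOf, if_pos rfl] at hk
    rcases hk with hk | hk
    · exact hk
    · exact absurd (Set.mem_iUnion.2 hω) hk
  · rw [partOf, if_neg h0] at hk
    exact hk.1

/-- The set `F(w) = {u ∈ G : φ(u) + α‖u-w‖ ≤ φ(w)}`. -/
def Fs (N : RNModule P E) (φ : E → L0e P) (α : L0 P) (G : Set E) (w : E) : Set E :=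
  {u | u ∈ G ∧ ∀ᵐ ω ∂P, φ u ω + ((α ω * N.nm (u - w) ω : ℝ) : EReal) ≤ φ w ω}

variable {N} {φ : E → L0e P} {α : L0 P} {G : Set E}

lemma self_mem_Fs {w : E} (hw : w ∈ G) : w ∈ Fs N φ α G w := by
  refine ⟨hw, ?_⟩
  have h0 : N.nm (w - w) = 0 := by rw [sub_self]; exact N.nm_zero'
  rw [h0]
  filter_upwards [MeasureTheory.AEEqFun.coeFn_zero (β := ℝ) (μ := P)] with ω h
  rw [h]
  simp

lemma Fs_subset {w : E} : Fs N φ α G w ⊆ G := fun _ h => h.1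

lemma Fs_trans (hα : ∀ᵐ ω ∂P, 0 ≤ α ω) {u v w : E}
    (hu : u ∈ Fs N φ α G v) (hv : v ∈ Fs N φ α G w) : u ∈ Fs N φ α G w := by
  refine ⟨hu.1, ?_⟩
  have htri : ∀ᵐ ω ∂P, N.nm (u - w) ω ≤ N.nm (u - v) ω + N.nm (v - w) ω := by
    have h := N.nm_add_le (u - v) (v - w)
    rw [sub_add_sub_cancel] at h
    exact h
  filter_upwards [htri, hu.2, hv.2, hα] with ω h1 h2 h3 h4
  calc φ u ω + ((α ω * N.nm (u - w) ω : ℝ) : EReal)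
      ≤ φ u ω + ((α ω * N.nm (u - v) ω + α ω * N.nm (v - w) ω : ℝ) : EReal) := by
        apply add_le_add_right
        apply EReal.coe_le_coe_iff.2
        rw [← mul_add]
        exact mul_le_mul_of_nonneg_left h1 h4
    _ = (φ u ω + ((α ω * N.nm (u - v) ω : ℝ) : EReal))
          + ((α ω * N.nm (v - w) ω : ℝ) : EReal) := by
        rw [EReal.coe_add, add_assoc]
    _ ≤ φ v ω + ((α ω * N.nm (v - w) ω : ℝ) : EReal) := add_le_add_left h2 _
    _ ≤ φ w ω := h3

lemma Fs_le (hα : ∀ᵐ ω ∂P, 0 ≤ α ω) {u w : E} (hu : u ∈ Fs N φ α G w) :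
    ∀ᵐ ω ∂P, φ u ω ≤ φ w ω := by
  filter_upwards [hu.2, hα, N.nm_nonneg (u - w)] with ω h1 h2 h3
  calc φ u ω = φ u ω + ((0:ℝ) : EReal) := by simp
    _ ≤ φ u ω + ((α ω * N.nm (u - w) ω : ℝ) : EReal) :=
        add_le_add_right (EReal.coe_le_coe_iff.2 (mul_nonneg h2 h3)) _
    _ ≤ φ w ω := h1

lemma Fs_concat (hloc : N.LocalProp φ) (hGCC : N.HasCC G) {w : E}
    (u : ℕ → E) (hu : ∀ n, u n ∈ Fs N φ α G w)
    (A : ℕ → Set Ω) (hA : ∀ n, MeasurableSet (A n))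
    (hdisj : ∀ i j, i ≠ j → Disjoint (A i) (A j)) (huniv : (⋃ n, A n) = Set.univ) :
    ∃ y ∈ Fs N φ α G w, ∀ n,
      N.smul (indL0 P (A n) (hA n)) y = N.smul (indL0 P (A n) (hA n)) (u n) := by
  obtain ⟨y, hyG, hy⟩ := hGCC u (fun n => (hu n).1) A hA hdisj huniv
  refine ⟨y, ⟨hyG, ?_⟩, hy⟩
  have h1 : ∀ᵐ ω ∂P, ∀ n, ω ∈ A n → φ y ω = φ (u n) ω :=
    MeasureTheory.ae_all_iff.2 fun n => N.phi_eq_on_of_ind_eq hloc (hy n)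
  have h2 : ∀ᵐ ω ∂P, ∀ n, ω ∈ A n → N.nm (y - w) ω = N.nm (u n - w) ω :=
    MeasureTheory.ae_all_iff.2 fun n => N.nm_eq_on_of_ind_eq (hy n) w
  have h3 : ∀ᵐ ω ∂P, ∀ n,
      φ (u n) ω + ((α ω * N.nm (u n - w) ω : ℝ) : EReal) ≤ φ w ω :=
    MeasureTheory.ae_all_iff.2 fun n => (hu n).2
  filter_upwards [h1, h2, h3] with ω h1 h2 h3
  obtain ⟨n, hn⟩ : ∃ n, ω ∈ A n := by
    have : ω ∈ ⋃ n, A n := huniv ▸ Set.mem_univ ω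
    exact Set.mem_iUnion.1 this
  rw [h1 n hn, h2 n hn]
  exact h3 n

/-- Concatenation hypothesis for a set `S`. -/
def CCH (N : RNModule P E) (S : Set E) : Prop :=
  ∀ (u : ℕ → E), (∀ n, u n ∈ S) →
    ∀ (A : ℕ → Set Ω) (hA : ∀ n, MeasurableSet (A n)),
      (∀ i j, i ≠ j → Disjoint (A i) (A j)) → (⋃ n, A n) = Set.univ →
        ∃ y ∈ S, ∀ n,
          N.smul (indL0 P (A n) (hA n)) y = N.smul (indL0 P (A n) (hA n)) (u n)

lemma concat_two {S : Set E} (hloc : N.LocalProp φ) (hcc : CCH N S)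
    {p q : E} (hp : p ∈ S) (hq : q ∈ S) {B : Set Ω} (hB : MeasurableSet B) :
    ∃ w ∈ S, (∀ᵐ ω ∂P, ω ∈ B → φ w ω = φ p ω) ∧
      (∀ᵐ ω ∂P, ω ∉ B → φ w ω = φ q ω) := by
  classical
  set A : ℕ → Set Ω := fun n => if n = 0 then B else if n = 1 then Bᶜ else ∅ with hAdef
  have hA : ∀ n, MeasurableSet (A n) := by
    intro n
    simp only [hAdef]
    split
    · exact hB
    · split
      · exact hB.compl
      · exact MeasurableSet.empty
  have hdisj : ∀ i j, i ≠ j → Disjoint (A i) (A j) := by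
    intro i j hij
    rw [Set.disjoint_left]
    intro a hai haj
    rw [hAdef] at hai haj
    simp only [] at hai haj
    by_cases hi0 : i = 0 <;> by_cases hj0 : j = 0 <;>
      by_cases hi1 : i = 1 <;> by_cases hj1 : j = 1 <;>
      simp_all
  have huniv : (⋃ n, A n) = Set.univ := by
    apply Set.eq_univ_of_forall
    intro ω
    by_cases hω : ω ∈ B
    · exact Set.mem_iUnion.2 ⟨0, by simp [hAdef, hω]⟩
    · exact Set.mem_iUnion.2 ⟨1, by simp [hAdef, hω]⟩
  set u : ℕ → E := fun n => if n = 0 then p else q with hudef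
  have hu : ∀ n, u n ∈ S := by
    intro n
    simp only [hudef]
    split
    · exact hp
    · exact hq
  obtain ⟨w, hwS, hw⟩ := hcc u hu A hA hdisj huniv
  refine ⟨w, hwS, ?_, ?_⟩
  · have := N.phi_eq_on_of_ind_eq hloc (hw 0)
    filter_upwards [this] with ω h hω
    exact h (by simpa [hAdef] using hω)
  · have := N.phi_eq_on_of_ind_eq hloc (hw 1)
    filter_upwards [this] with ω h hω
    exact h (by simpa [hAdef] using hω)

lemma measurable_erealToReal : Measurable EReal.toReal :=
  EReal.measurable_of_measurable_real fun _ a => a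

lemma coe_min_ereal (a c : ℝ) : ((min a c : ℝ) : EReal) = min (a : EReal) (c : EReal) := by
  rcases le_total a c with h | h
  · rw [min_eq_left h, min_eq_left (EReal.coe_le_coe_iff.2 h)]
  · rw [min_eq_right h, min_eq_right (EReal.coe_le_coe_iff.2 h)]

lemma approx_inf {S : Set E} (hloc : N.LocalProp φ) (hcc : CCH N S)
    {y₀ : E} (hy₀ : y₀ ∈ S) (ξ b : L0 P)
    (hbound : ∀ u ∈ S, ∀ᵐ ω ∂P, (ξ ω : EReal) ≤ φ u ω ∧ φ u ω ≤ (b ω : EReal))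
    {δ : ℝ} (hδ : 0 < δ) :
    ∃ v ∈ S, ∀ u ∈ S, ∀ᵐ ω ∂P, φ v ω ≤ φ u ω + (δ : EReal) := by
  classical
  set ψ : E → Ω → ℝ := fun u ω => (φ u ω).toReal with hψdef
  have hψmeas : ∀ u, Measurable (ψ u) := fun u =>
    measurable_erealToReal.comp (φ u).measurable
  have hcoe : ∀ u ∈ S, ∀ᵐ ω ∂P, φ u ω = ((ψ u ω : ℝ) : EReal) := by
    intro u hu
    filter_upwards [hbound u hu] with ω hω
    have h1 : φ u ω ≠ ⊤ := (lt_of_le_of_lt hω.2 (EReal.coe_lt_top _)).ne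
    have h2 : φ u ω ≠ ⊥ := (lt_of_lt_of_le (EReal.bot_lt_coe _) hω.1).ne'
    exact (EReal.coe_toReal h1 h2).symm
  have hψb : ∀ u ∈ S, ∀ᵐ ω ∂P, ξ ω ≤ ψ u ω ∧ ψ u ω ≤ b ω := by
    intro u hu
    filter_upwards [hbound u hu, hcoe u hu] with ω h1 h2
    rw [h2] at h1
    exact ⟨EReal.coe_le_coe_iff.1 h1.1, EReal.coe_le_coe_iff.1 h1.2⟩
  set m : E → ℝ := fun u => ∫ ω, Real.arctan (ψ u ω) ∂P with hmdef
  have harc_bdd : ∀ x : ℝ, ‖Real.arctan x‖ ≤ 2 := by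
    intro x
    rw [Real.norm_eq_abs, abs_le]
    constructor
    · nlinarith [Real.neg_pi_div_two_lt_arctan x, Real.pi_le_four]
    · nlinarith [Real.arctan_lt_pi_div_two x, Real.pi_le_four]
  have hint : ∀ u, Integrable (fun ω => Real.arctan (ψ u ω)) P := fun u =>
    Integrable.mono' (integrable_const 2)
      ((Real.continuous_arctan.measurable.comp (hψmeas u)).aestronglyMeasurable)
      (Filter.Eventually.of_forall fun ω => harc_bdd _)
  have hm_bdd : ∀ u, -2 ≤ m u := by
    intro u
    have h1 : ∫ (_ : Ω), (-2 : ℝ) ∂P = -2 := by simp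
    rw [← h1]
    exact integral_mono (integrable_const _) (hint u)
      (fun ω => neg_le_of_abs_le (by simpa [Real.norm_eq_abs] using harc_bdd (ψ u ω)))
  set I := sInf (m '' S) with hIdef
  have hSne : (m '' S).Nonempty := ⟨m y₀, ⟨y₀, hy₀, rfl⟩⟩
  have hbddb : BddBelow (m '' S) := ⟨-2, by rintro _ ⟨u, hu, rfl⟩; exact hm_bdd u⟩
  have hIle : ∀ u ∈ S, I ≤ m u := fun u hu => csInf_le hbddb ⟨u, hu, rfl⟩
  have hex : ∀ k : ℕ, ∃ u ∈ S, m u < I + 1/(k+1) := by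
    intro k
    have hpos : I < I + 1/(k+1) := lt_add_of_pos_right I (by positivity)
    obtain ⟨y, ⟨u, hu, rfl⟩, hy⟩ := exists_lt_of_csInf_lt hSne hpos
    exact ⟨u, hu, hy⟩
  choose u hu hum using hex
  have hmin : ∀ p, p ∈ S → ∀ q, q ∈ S →
      ∃ w, w ∈ S ∧ ∀ᵐ ω ∂P, φ w ω = min (φ p ω) (φ q ω) := by
    intro p hp q hq
    have hB : MeasurableSet {ω | (φ p) ω ≤ (φ q) ω} :=
      measurableSet_le (φ p).measurable (φ q).measurable
    obtain ⟨w, hwS, h1, h2⟩ := concat_two hloc hcc hp hq hB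
    refine ⟨w, hwS, ?_⟩
    filter_upwards [h1, h2] with ω h1 h2
    by_cases hω : (φ p) ω ≤ (φ q) ω
    · rw [h1 hω, min_eq_left hω]
    · rw [h2 hω, min_eq_right (le_of_not_ge hω)]
  choose mc hmcS hmcmin using hmin
  set v : ℕ → {p : E // p ∈ S} := fun k => Nat.rec ⟨u 0, hu 0⟩
    (fun k p => ⟨mc p.1 p.2 (u (k+1)) (hu (k+1)), hmcS _ _ _ _⟩) k with hvdef
  have hvS : ∀ k, (v k).1 ∈ S := fun k => (v k).2
  have hvmin : ∀ k, ∀ᵐ ω ∂P, φ (v (k+1)).1 ω = min (φ (v k).1 ω) (φ (u (k+1)) ω) :=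
    fun k => hmcmin _ _ _ _
  -- ψ-level descriptions
  have hψmin : ∀ k, ∀ᵐ ω ∂P, ψ (v (k+1)).1 ω = min (ψ (v k).1 ω) (ψ (u (k+1)) ω) := by
    intro k
    filter_upwards [hvmin k, hcoe _ (hvS (k+1)), hcoe _ (hvS k), hcoe _ (hu (k+1))]
      with ω h1 h2 h3 h4
    have : ((ψ (v (k+1)).1 ω : ℝ) : EReal) = ((min (ψ (v k).1 ω) (ψ (u (k+1)) ω) : ℝ) : EReal) := by
      rw [← h2, h1, h3, h4, coe_min_ereal]
    exact_mod_cast this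
  have hanti : ∀ k, ∀ᵐ ω ∂P, ψ (v (k+1)).1 ω ≤ ψ (v k).1 ω := by
    intro k
    filter_upwards [hψmin k] with ω h1
    rw [h1]
    exact min_le_left _ _
  have hmv_le : ∀ k, m (v k).1 ≤ I + 1/(k+1) := by
    intro k
    induction k with
    | zero => exact (hum 0).le
    | succ k _ =>
      have hle : m (v (k+1)).1 ≤ m (u (k+1)) := by
        apply integral_mono_ae (hint _) (hint _)
        filter_upwards [hψmin k] with ω h1
        exact Real.arctan_strictMono.monotone (by rw [h1]; exact min_le_right _ _)
      exact hle.trans (hum (k+1)).le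
  set h : Ω → ℝ := fun ω => ⨅ k, ψ (v k).1 ω with hhdef
  have hhmeas : Measurable h := Measurable.iInf (fun k => hψmeas _)
  have hgood : ∀ᵐ ω ∂P, (∀ k, ψ (v (k+1)).1 ω ≤ ψ (v k).1 ω) ∧
      (∀ k, ξ ω ≤ ψ (v k).1 ω ∧ ψ (v k).1 ω ≤ b ω) :=
    (MeasureTheory.ae_all_iff.2 hanti).and
      (MeasureTheory.ae_all_iff.2 fun k => hψb _ (hvS k))
  have htend : ∀ᵐ ω ∂P, Filter.Tendsto (fun k => ψ (v k).1 ω) Filter.atTop (nhds (h ω)) := by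
    filter_upwards [hgood] with ω hω
    exact tendsto_atTop_ciInf (antitone_nat_of_succ_le hω.1)
      ⟨ξ ω, by rintro _ ⟨k, rfl⟩; exact (hω.2 k).1⟩
  have hIm : ∫ ω, Real.arctan (h ω) ∂P = I := by
    have hdct : Filter.Tendsto (fun k => m (v k).1) Filter.atTop
        (nhds (∫ ω, Real.arctan (h ω) ∂P)) := by
      apply tendsto_integral_of_dominated_convergence (fun _ => (2:ℝ))
      · exact fun k => (Real.continuous_arctan.measurable.comp (hψmeas _)).aestronglyMeasurable
      · exact integrable_const 2
      · exact fun k => Filter.Eventually.of_forall fun ω => harc_bdd _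
      · filter_upwards [htend] with ω hω
        exact (Real.continuous_arctan.continuousAt.tendsto.comp hω)
    have hsq : Filter.Tendsto (fun k => m (v k).1) Filter.atTop (nhds I) := by
      apply tendsto_of_tendsto_of_tendsto_of_le_of_le (g := fun _ => I)
        (h := fun k : ℕ => I + 1/(k+1)) tendsto_const_nhds
      · have : Filter.Tendsto (fun k : ℕ => 1/((k:ℝ)+1)) Filter.atTop (nhds 0) :=
          tendsto_one_div_add_atTop_nhds_zero_nat
        simpa using tendsto_const_nhds.add this
      · exact fun k => hIle _ (hvS k)
      · exact fun k => hmv_le k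
    exact tendsto_nhds_unique hdct hsq
  -- h is an a.e. lower bound for ψ on S
  have hhle : ∀ p ∈ S, ∀ᵐ ω ∂P, h ω ≤ ψ p ω := by
    intro p hp
    by_contra hcon
    set B := {ω | ψ p ω < h ω} with hBdef
    have hBmeas : MeasurableSet B := measurableSet_lt (hψmeas p) hhmeas
    have hBpos : P B ≠ 0 := by
      intro h0
      apply hcon
      filter_upwards [(MeasureTheory.measure_eq_zero_iff_ae_notMem).1 h0] with ω hω
      exact le_of_not_gt (fun hlt => hω hlt)
    have hW : ∀ k : ℕ, ∃ w, w ∈ S ∧ (∀ᵐ ω ∂P, ω ∈ B → φ w ω = φ p ω) ∧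
        (∀ᵐ ω ∂P, ω ∉ B → φ w ω = φ (v k).1 ω) := by
      intro k
      obtain ⟨w, hwS, h1, h2⟩ := concat_two hloc hcc hp (hvS k) hBmeas
      exact ⟨w, hwS, h1, h2⟩
    choose w hwS hw1 hw2 using hW
    have hψw : ∀ k, (fun ω => Real.arctan (ψ (w k) ω)) =ᵐ[P]
        (fun ω => B.indicator (fun ω => Real.arctan (ψ p ω)) ω
          + Bᶜ.indicator (fun ω => Real.arctan (ψ (v k).1 ω)) ω) := by
      intro k
      filter_upwards [hw1 k, hw2 k] with ω h1 h2
      by_cases hω : ω ∈ B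
      · rw [Set.indicator_of_mem hω, Set.indicator_of_notMem (by simpa using hω), add_zero,
          hψdef]
        simp only []
        rw [h1 hω]
      · rw [Set.indicator_of_notMem hω, Set.indicator_of_mem (by simpa using hω), zero_add,
          hψdef]
        simp only []
        rw [h2 hω]
    have hmw : ∀ k, m (w k) = (∫ ω, B.indicator (fun ω => Real.arctan (ψ p ω)) ω ∂P)
        + ∫ ω, Bᶜ.indicator (fun ω => Real.arctan (ψ (v k).1 ω)) ω ∂P := by
      intro k
      rw [hmdef]
      simp only []
      rw [integral_congr_ae (hψw k)]
      exact integral_add ((hint p).indicator hBmeas) ((hint _).indicator hBmeas.compl)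
    have hlim2 : Filter.Tendsto (fun k => ∫ ω, Bᶜ.indicator
        (fun ω => Real.arctan (ψ (v k).1 ω)) ω ∂P) Filter.atTop
        (nhds (∫ ω, Bᶜ.indicator (fun ω => Real.arctan (h ω)) ω ∂P)) := by
      apply tendsto_integral_of_dominated_convergence (fun _ => (2:ℝ))
      · exact fun k => ((Real.continuous_arctan.measurable.comp
          (hψmeas _)).indicator hBmeas.compl).aestronglyMeasurable
      · exact integrable_const 2
      · intro k
        apply Filter.Eventually.of_forall
        intro ω
        by_cases hω : ω ∈ Bᶜ
        · rw [Set.indicator_of_mem hω]; exact harc_bdd _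
        · rw [Set.indicator_of_notMem hω]; simp
      · filter_upwards [htend] with ω hω
        by_cases hmem : ω ∈ Bᶜ
        · simp only [Set.indicator_of_mem hmem]
          exact Real.continuous_arctan.continuousAt.tendsto.comp hω
        · simp only [Set.indicator_of_notMem hmem]
          exact tendsto_const_nhds
    have hIlim : I ≤ (∫ ω, B.indicator (fun ω => Real.arctan (ψ p ω)) ω ∂P)
        + ∫ ω, Bᶜ.indicator (fun ω => Real.arctan (h ω)) ω ∂P := by
      have := le_of_tendsto_of_tendsto' tendsto_const_nhds
        (tendsto_const_nhds.add hlim2) (fun k => by rw [← hmw k]; exact hIle _ (hwS k))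
      simpa using this
    have hinth : Integrable (fun ω => Real.arctan (h ω)) P :=
      Integrable.mono' (integrable_const 2)
        ((Real.continuous_arctan.measurable.comp hhmeas).aestronglyMeasurable)
        (Filter.Eventually.of_forall fun ω => harc_bdd _)
    have hsplit : (∫ ω, Real.arctan (h ω) ∂P) =
        (∫ ω, B.indicator (fun ω => Real.arctan (h ω)) ω ∂P)
        + ∫ ω, Bᶜ.indicator (fun ω => Real.arctan (h ω)) ω ∂P := by
      rw [← integral_add (hinth.indicator hBmeas) (hinth.indicator hBmeas.compl)]
      apply integral_congr_ae
      apply Filter.Eventually.of_forall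
      intro ω
      by_cases hω : ω ∈ B
      · simp [Set.indicator_of_mem hω,
          Set.indicator_of_notMem (show ω ∉ Bᶜ from by simpa using hω)]
      · simp [Set.indicator_of_notMem hω,
          Set.indicator_of_mem (show ω ∈ Bᶜ from by simpa using hω)]
    have hkey : ∫ ω, B.indicator (fun ω => Real.arctan (h ω)) ω ∂P
        ≤ ∫ ω, B.indicator (fun ω => Real.arctan (ψ p ω)) ω ∂P := by
      have h5 := hIlim
      rw [← hIm, hsplit] at h5
      linarith
    set g : Ω → ℝ :=
      fun ω => B.indicator (fun ω => Real.arctan (h ω) - Real.arctan (ψ p ω)) ω with hgdef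
    have hg_eq : g = fun ω => B.indicator (fun ω => Real.arctan (h ω)) ω
        - B.indicator (fun ω => Real.arctan (ψ p ω)) ω := by
      funext ω
      by_cases hω : ω ∈ B
      · simp only [hgdef]
        rw [Set.indicator_of_mem hω, Set.indicator_of_mem hω, Set.indicator_of_mem hω]
      · simp only [hgdef]
        rw [Set.indicator_of_notMem hω, Set.indicator_of_notMem hω,
          Set.indicator_of_notMem hω, sub_zero]
    have hg_nonneg : 0 ≤ g := by
      intro ω
      by_cases hω : ω ∈ B
      · simp only [hgdef, Pi.zero_apply]
        rw [Set.indicator_of_mem hω]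
        have hlt : ψ p ω < h ω := by rw [hBdef] at hω; exact hω
        have := Real.arctan_strictMono hlt
        linarith
      · simp only [hgdef, Pi.zero_apply]
        rw [Set.indicator_of_notMem hω]
    have hg_int : Integrable g P := by
      rw [hg_eq]
      exact (hinth.indicator hBmeas).sub ((hint p).indicator hBmeas)
    have hg_zero : ∫ ω, g ω ∂P = 0 := by
      apply le_antisymm
      · have h6 : ∫ ω, g ω ∂P = (∫ ω, B.indicator (fun ω => Real.arctan (h ω)) ω ∂P)
            - ∫ ω, B.indicator (fun ω => Real.arctan (ψ p ω)) ω ∂P := by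
          rw [hg_eq]
          exact integral_sub (hinth.indicator hBmeas) ((hint p).indicator hBmeas)
        rw [h6]
        linarith
      · exact integral_nonneg hg_nonneg
    have hg_ae := (integral_eq_zero_iff_of_nonneg hg_nonneg hg_int).1 hg_zero
    apply hBpos
    apply (MeasureTheory.measure_eq_zero_iff_ae_notMem).2
    filter_upwards [hg_ae] with ω hω hmem
    have hlt : ψ p ω < h ω := by rw [hBdef] at hmem; exact hmem
    have h7 := Real.arctan_strictMono hlt
    have h8 : g ω = 0 := hω
    simp only [hgdef] at h8
    rw [Set.indicator_of_mem hmem] at h8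
    linarith
  -- final concatenation: a point within δ of the infimum
  set C : ℕ → Set Ω := fun k => {ω | ψ (v k).1 ω ≤ h ω + δ} with hCdef
  have hCmeas : ∀ k, MeasurableSet (C k) := fun k =>
    measurableSet_le (hψmeas _) (hhmeas.add_const δ)
  have hCcov : ∀ᵐ ω ∂P, ∃ k, ω ∈ C k := by
    filter_upwards [htend] with ω hω
    obtain ⟨k, hk⟩ :=
      (hω.eventually (eventually_le_nhds (lt_add_of_pos_right (h ω) hδ))).exists
    exact ⟨k, hk⟩
  obtain ⟨vf, hvfS, hvf⟩ := hcc (fun k => (v k).1) hvS (partOf C)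
    (fun k => partOf_measurable hCmeas k) (partOf_disjoint C) (partOf_union C)
  have hvf_le : ∀ᵐ ω ∂P, φ vf ω ≤ ((h ω + δ : ℝ) : EReal) := by
    have h1 : ∀ᵐ ω ∂P, ∀ k, ω ∈ partOf C k → φ vf ω = φ (v k).1 ω :=
      MeasureTheory.ae_all_iff.2 fun k => N.phi_eq_on_of_ind_eq hloc (hvf k)
    have h2 : ∀ᵐ ω ∂P, ∀ k, ω ∈ partOf C k → ω ∈ C k := partOf_ae_subset hCcov
    have h3 : ∀ᵐ ω ∂P, ∀ k, φ (v k).1 ω = ((ψ (v k).1 ω : ℝ) : EReal) :=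
      MeasureTheory.ae_all_iff.2 fun k => hcoe _ (hvS k)
    filter_upwards [h1, h2, h3] with ω h1 h2 h3
    have hωuniv : ω ∈ ⋃ k, partOf C k := (partOf_union C) ▸ Set.mem_univ ω
    obtain ⟨k, hk⟩ := Set.mem_iUnion.1 hωuniv
    rw [h1 k hk, h3 k]
    have hCk : ψ (v k).1 ω ≤ h ω + δ := by
      have := h2 k hk
      rw [hCdef] at this
      exact this
    exact EReal.coe_le_coe_iff.2 hCk
  refine ⟨vf, hvfS, ?_⟩
  intro q hq
  filter_upwards [hvf_le, hhle q hq, hcoe q hq] with ω h1 h2 h3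
  rw [h3, ← EReal.coe_add]
  exact h1.trans (EReal.coe_le_coe_iff.2 (by linarith))

lemma ereal_cancel {x y : EReal} {c d : ℝ} (h1 : x + (c : EReal) ≤ y)
    (h2 : y ≤ x + (d : EReal)) (hx1 : x ≠ ⊤) (hx2 : x ≠ ⊥) : c ≤ d := by
  lift x to ℝ using ⟨hx1, hx2⟩
  rw [← EReal.coe_add] at h1 h2
  have h3 := h1.trans h2
  rw [EReal.coe_le_coe_iff] at h3
  linarith

end EkelandAux
set_option maxHeartbeats 2000000 in
/-- Theorem 3.10: the precise form of Ekeland's variational principle on a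
`𝒯_c`-complete RN module with the countable concatenation property, for a function with
the local property whose restriction to a `𝒯_c`-closed `G` with the countable
concatenation property is proper, `𝒯_c`-lower semicontinuous and bounded from below. -/
theorem ekeland_precise_Tc
    {Ω : Type*} [MeasurableSpace Ω] {P : Measure Ω} [IsProbabilityMeasure P]
    {E : Type*} [AddCommGroup E] (N : RNModule P E) (hcomp : N.cComplete)
    (hCCE : N.HasCC Set.univ)
    (ε : L0 P) (hε : ε ∈ L0pp P)
    (φ : E → L0e P) (hloc : N.LocalProp φ)
    (G : Set E) (hGcl : N.cClosed G) (hGCC : N.HasCC G)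
    (hproper : ProperOn φ G) (hlsc : N.cLscOn φ G) (hbdd : BddBelowOn φ G)
    (x₀ : E) (hx₀G : x₀ ∈ G)
    (hx₀ : ∃ η : L0e P, IsInfOn φ G η ∧ ∀ᵐ ω ∂P, φ x₀ ω ≤ η ω + (ε ω : EReal))
    (α : L0 P) (hα : α ∈ L0pp P) :
    ∃ z ∈ G,
      (∀ᵐ ω ∂P, φ z ω + ((α ω * N.nm (z - x₀) ω : ℝ) : EReal) ≤ φ x₀ ω) ∧
      (∀ᵐ ω ∂P, N.nm (z - x₀) ω ≤ (α ω)⁻¹ * ε ω) ∧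
      ∀ x ∈ G, x ≠ z → ∃ A : Set Ω, MeasurableSet A ∧ 0 < P A ∧
        ∀ᵐ ω ∂P, ω ∈ A → φ z ω < φ x ω + ((α ω * N.nm (x - z) ω : ℝ) : EReal) := by
  classical
  obtain ⟨ξ, hξ⟩ := hbdd
  obtain ⟨η, hηinf, hx₀η⟩ := hx₀
  obtain ⟨xbar, hxbarG, hxbartop⟩ := hproper.2
  have hαpos : ∀ᵐ ω ∂P, 0 < α ω := hα
  have hαnn : ∀ᵐ ω ∂P, 0 ≤ α ω := hαpos.mono fun ω h => h.le
  have hεpos : ∀ᵐ ω ∂P, 0 < ε ω := hε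
  have hbot : ∀ x ∈ G, ∀ᵐ ω ∂P, ⊥ < φ x ω := hproper.1
  have hηtop : ∀ᵐ ω ∂P, η ω < ⊤ := by
    filter_upwards [hηinf.1 xbar hxbarG, hxbartop] with ω h1 h2
    exact lt_of_le_of_lt h1 h2
  have hx₀top : ∀ᵐ ω ∂P, φ x₀ ω < ⊤ := by
    filter_upwards [hx₀η, hηtop] with ω h1 h2
    exact lt_of_le_of_lt h1 (EReal.add_lt_top h2.ne (EReal.coe_ne_top _))
  have hcch : ∀ w : E, CCH N (Fs N φ α G w) :=
    fun w u hu A hA hd hun => Fs_concat hloc hGCC u hu A hA hd hun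
  -- one construction step
  have hstep : ∀ (n : ℕ) (p : E), p ∈ G → (∀ᵐ ω ∂P, φ p ω < ⊤) →
      ∃ y, (y ∈ Fs N φ α G p ∧ (∀ᵐ ω ∂P, φ y ω < ⊤)) ∧
        ∀ u ∈ Fs N φ α G p, ∀ᵐ ω ∂P, φ y ω ≤ φ u ω + (((1/2 : ℝ)^n : ℝ) : EReal) := by
    intro n p hpG hptop
    set b : L0 P := AEEqFun.mk (fun ω => (φ p ω).toReal)
      ((measurable_erealToReal.comp (φ p).measurable).aestronglyMeasurable) with hbdef
    have hbco : ⇑b =ᵐ[P] fun ω => (φ p ω).toReal := AEEqFun.coeFn_mk _ _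
    have hbound : ∀ u ∈ Fs N φ α G p, ∀ᵐ ω ∂P,
        (ξ ω : EReal) ≤ φ u ω ∧ φ u ω ≤ (b ω : EReal) := by
      intro u hu
      filter_upwards [hξ u hu.1, Fs_le hαnn hu, hbco, hptop, hbot p hpG]
        with ω h1 h2 h3 h4 h5
      refine ⟨h1, ?_⟩
      rw [h3, EReal.coe_toReal h4.ne h5.ne']
      exact h2
    obtain ⟨v, hvF, hv⟩ := approx_inf hloc (hcch p) (self_mem_Fs hpG) ξ b hbound
      (by positivity : (0:ℝ) < (1/2)^n)
    refine ⟨v, ⟨hvF, ?_⟩, hv⟩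
    filter_upwards [Fs_le hαnn hvF, hptop] with ω h1 h2
    exact lt_of_le_of_lt h1 h2
  choose nxt hnxt1 hnxt2 using hstep
  -- the recursive sequence
  set x : ℕ → {p : E // p ∈ G ∧ ∀ᵐ ω ∂P, φ p ω < ⊤} := fun n => Nat.rec ⟨x₀, hx₀G, hx₀top⟩
    (fun n p => ⟨nxt n p.1 p.2.1 p.2.2,
      (hnxt1 n p.1 p.2.1 p.2.2).1.1, (hnxt1 n p.1 p.2.1 p.2.2).2⟩) n with hxdef
  have hx0 : (x 0).1 = x₀ := rfl
  have hxG : ∀ n, (x n).1 ∈ G := fun n => (x n).2.1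
  have hxtop : ∀ n, ∀ᵐ ω ∂P, φ (x n).1 ω < ⊤ := fun n => (x n).2.2
  have hxbot : ∀ n, ∀ᵐ ω ∂P, ⊥ < φ (x n).1 ω := fun n => hbot _ (hxG n)
  have hFs : ∀ n, (x (n+1)).1 ∈ Fs N φ α G (x n).1 :=
    fun n => (hnxt1 n (x n).1 (x n).2.1 (x n).2.2).1
  have happrox : ∀ n, ∀ u ∈ Fs N φ α G (x n).1,
      ∀ᵐ ω ∂P, φ (x (n+1)).1 ω ≤ φ u ω + (((1/2 : ℝ)^n : ℝ) : EReal) :=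
    fun n => hnxt2 n (x n).1 (x n).2.1 (x n).2.2
  have hchain : ∀ n m, n ≤ m → (x m).1 ∈ Fs N φ α G (x n).1 := by
    intro n m hnm
    induction m with
    | zero =>
      have : n = 0 := Nat.le_zero.1 hnm
      subst this
      exact self_mem_Fs (hxG 0)
    | succ m ih =>
      rcases Nat.lt_or_ge n (m+1) with h | h
      · exact Fs_trans hαnn (hFs m) (ih (Nat.lt_succ_iff.1 h))
      · have : n = m + 1 := le_antisymm hnm h
        subst this
        exact self_mem_Fs (hxG (m+1))
  -- real-valued representatives
  set r : ℕ → L0 P := fun n => AEEqFun.mk (fun ω => (φ (x n).1 ω).toReal)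
    ((measurable_erealToReal.comp (φ (x n).1).measurable).aestronglyMeasurable) with hrdef
  have hrco : ∀ n, ⇑(r n) =ᵐ[P] fun ω => (φ (x n).1 ω).toReal :=
    fun n => AEEqFun.coeFn_mk _ _
  have hr : ∀ n, ∀ᵐ ω ∂P, φ (x n).1 ω = ((r n ω : ℝ) : EReal) := by
    intro n
    filter_upwards [hrco n, hxtop n, hxbot n] with ω h1 h2 h3
    rw [h1, EReal.coe_toReal h2.ne h3.ne']
  have hrξ : ∀ n, ∀ᵐ ω ∂P, ξ ω ≤ r n ω := by
    intro n
    filter_upwards [hξ _ (hxG n), hr n] with ω h1 h2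
    rw [h2] at h1
    exact EReal.coe_le_coe_iff.1 h1
  have hrchain : ∀ n m, n ≤ m →
      ∀ᵐ ω ∂P, r m ω + α ω * N.nm ((x m).1 - (x n).1) ω ≤ r n ω := by
    intro n m hnm
    filter_upwards [(hchain n m hnm).2, hr n, hr m] with ω h1 h2 h3
    rw [h2, h3, ← EReal.coe_add] at h1
    exact EReal.coe_le_coe_iff.1 h1
  have hrapprox : ∀ n m, n ≤ m → ∀ᵐ ω ∂P, r (n+1) ω ≤ r m ω + (1/2:ℝ)^n := by
    intro n m hnm
    filter_upwards [happrox n _ (hchain n m hnm), hr (n+1), hr m] with ω h1 h2 h3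
    rw [h2, h3, ← EReal.coe_add] at h1
    exact EReal.coe_le_coe_iff.1 h1
  have hrmono : ∀ n m, n ≤ m → ∀ᵐ ω ∂P, r m ω ≤ r n ω := by
    intro n m hnm
    filter_upwards [Fs_le hαnn (hchain n m hnm), hr n, hr m] with ω h1 h2 h3
    rw [h2, h3] at h1
    exact EReal.coe_le_coe_iff.1 h1
  -- the Cauchy estimate
  have hC : ∀ n m, n + 1 ≤ m →
      ∀ᵐ ω ∂P, α ω * N.nm ((x m).1 - (x (n+1)).1) ω ≤ (1/2:ℝ)^n := by
    intro n m hnm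
    filter_upwards [(hchain (n+1) m hnm).2, happrox n _ (hchain n m (Nat.le_of_succ_le hnm)),
      hxtop m, hxbot m, hr m] with ω h1 h2 h3 h4 h5
    exact ereal_cancel h1 h2 h3.ne h4.ne'
  -- the infimum s of the φ (x n)
  set s : L0 P := AEEqFun.mk (fun ω => ⨅ n, r n ω)
    (Measurable.iInf (fun n => (r n).measurable)).aestronglyMeasurable with hsdef
  have hsco : ⇑s =ᵐ[P] fun ω => ⨅ n, r n ω := AEEqFun.coeFn_mk _ _
  have hrgood : ∀ᵐ ω ∂P, (∀ n m, n ≤ m → r m ω ≤ r n ω) ∧ (∀ n, ξ ω ≤ r n ω) := by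
    refine Filter.Eventually.and ?_ (MeasureTheory.ae_all_iff.2 hrξ)
    rw [MeasureTheory.ae_all_iff]
    intro n
    rw [MeasureTheory.ae_all_iff]
    intro m
    rcases le_or_gt n m with h | h
    · filter_upwards [hrmono n m h] with ω h1 _
      exact h1
    · filter_upwards [] with ω h1
      exact absurd h1 (by omega)
  have hstend : ∀ᵐ ω ∂P, Filter.Tendsto (fun n => r n ω) Filter.atTop (nhds (s ω)) := by
    filter_upwards [hsco, hrgood] with ω h1 h2
    rw [h1]
    exact tendsto_atTop_ciInf (fun a c hac => h2.1 a c hac)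
      ⟨ξ ω, by rintro _ ⟨n, rfl⟩; exact h2.2 n⟩
  have hsle : ∀ n, ∀ᵐ ω ∂P, s ω ≤ r n ω := by
    intro n
    filter_upwards [hsco, hrgood] with ω h1 h2
    rw [h1]
    exact ciInf_le ⟨ξ ω, by rintro _ ⟨k, rfl⟩; exact h2.2 k⟩ n
  have hsge : ∀ n, ∀ᵐ ω ∂P, r (n+1) ω ≤ s ω + (1/2:ℝ)^n := by
    intro n
    have hall : ∀ᵐ ω ∂P, ∀ m, n ≤ m → r (n+1) ω ≤ r m ω + (1/2:ℝ)^n := by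
      rw [MeasureTheory.ae_all_iff]
      intro m
      rcases le_or_gt n m with h | h
      · filter_upwards [hrapprox n m h] with ω h1 _
        exact h1
      · filter_upwards [] with ω h1
        exact absurd h1 (by omega)
    filter_upwards [hsco, hrgood, hall] with ω h1 h2 h3
    rw [h1]
    rw [← sub_le_iff_le_add]
    apply le_ciInf
    intro m
    rcases le_or_gt n m with h | h
    · linarith [h3 m h]
    · have : r m ω ≥ r (n+1) ω := h2.1 m (n+1) (by omega)
      have hp : (0:ℝ) < (1/2)^n := by positivity
      linarith
  -- auxiliary L0 elements
  haveI : Nonempty E := ⟨x₀⟩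
  have hconst : ∀ t : ℝ, 0 < t → (AEEqFun.const Ω (t:ℝ) : L0 P) ∈ L0pp P := by
    intro t ht
    have hc := AEEqFun.coeFn_const (α := Ω) (μ := P) (t:ℝ)
    filter_upwards [hc] with ω h
    rw [h]
    exact ht
  set l0min : L0 P → L0 P → L0 P := fun a c => AEEqFun.mk (fun ω => min (a ω) (c ω))
    ((a.measurable.min c.measurable).aestronglyMeasurable) with hl0min
  have hl0minco : ∀ a c : L0 P, ⇑(l0min a c) =ᵐ[P] fun ω => min (a ω) (c ω) :=
    fun a c => AEEqFun.coeFn_mk _ _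
  have hl0minpp : ∀ a c : L0 P, a ∈ L0pp P → c ∈ L0pp P → l0min a c ∈ L0pp P := by
    intro a c ha hc
    have ha' : ∀ᵐ ω ∂P, 0 < a ω := ha
    have hc' : ∀ᵐ ω ∂P, 0 < c ω := hc
    show ∀ᵐ ω ∂P, 0 < l0min a c ω
    filter_upwards [ha', hc', hl0minco a c] with ω h1 h2 h3
    rw [h3]
    exact lt_min h1 h2
  -- partitions adapted to ε' ∈ L0pp
  set Cs : L0 P → ℕ → Set Ω := fun e k => {ω | (1/2:ℝ)^k ≤ α ω * e ω} with hCsdef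
  have hCsmeas : ∀ e : L0 P, ∀ k, MeasurableSet (Cs e k) := fun e k =>
    measurableSet_le measurable_const (α.measurable.mul e.measurable)
  have hCscov : ∀ e : L0 P, e ∈ L0pp P → ∀ᵐ ω ∂P, ∃ k, ω ∈ Cs e k := by
    intro e he
    have he' : ∀ᵐ ω ∂P, 0 < e ω := he
    filter_upwards [hαpos, he'] with ω h1 h2
    obtain ⟨k, hk⟩ := exists_pow_lt_of_lt_one (mul_pos h1 h2) (by norm_num : (1/2:ℝ) < 1)
    exact ⟨k, hk.le⟩
  have hZex : ∀ e : L0 P, e ∈ L0pp P → ∃ y, y ∈ G ∧ ∀ k,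
      N.smul (indL0 P (partOf (Cs e) k) (partOf_measurable (hCsmeas e) k)) y
        = N.smul (indL0 P (partOf (Cs e) k) (partOf_measurable (hCsmeas e) k)) ((x (k+1)).1) := by
    intro e _
    obtain ⟨y, hyG, hy⟩ := hGCC (fun k => (x (k+1)).1) (fun k => hxG (k+1)) (partOf (Cs e))
      (fun k => partOf_measurable (hCsmeas e) k) (partOf_disjoint _) (partOf_union _)
    exact ⟨y, hyG, hy⟩
  choose Z hZG hZeq using hZex
  -- a.e. versions of the Cauchy estimates (all pairs)
  have hCall : ∀ᵐ ω ∂P, ∀ n m, n + 1 ≤ m →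
      α ω * N.nm ((x m).1 - (x (n+1)).1) ω ≤ (1/2:ℝ)^n := by
    rw [MeasureTheory.ae_all_iff]
    intro n
    rw [MeasureTheory.ae_all_iff]
    intro m
    rcases le_or_gt (n+1) m with h | h
    · filter_upwards [hC n m h] with ω h1 _
      exact h1
    · filter_upwards [] with ω h1
      exact absurd h1 (by omega)
  have hsymall : ∀ᵐ ω ∂P, ∀ k j : ℕ,
      N.nm ((x k).1 - (x j).1) ω = N.nm ((x j).1 - (x k).1) ω :=
    MeasureTheory.ae_all_iff.2 fun k => MeasureTheory.ae_all_iff.2 fun j =>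
      N.nm_sub_symm _ _
  -- pointwise comparison of concatenated approximants against the sequence
  have hZloc : ∀ (e : L0 P) (he : e ∈ L0pp P) (w : E), ∀ᵐ ω ∂P, ∀ k,
      ω ∈ partOf (Cs e) k → N.nm (Z e he - w) ω = N.nm ((x (k+1)).1 - w) ω :=
    fun e he w => MeasureTheory.ae_all_iff.2 fun k => N.nm_eq_on_of_ind_eq (hZeq e he k) w
  have hmemCs : ∀ (e : L0 P) (he : e ∈ L0pp P), ∀ᵐ ω ∂P, ∀ k,
      ω ∈ partOf (Cs e) k → (1/2:ℝ)^k ≤ α ω * e ω := by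
    intro e he
    filter_upwards [partOf_ae_subset (hCscov e he)] with ω h k hk
    exact h k hk
  have hZpair : ∀ (e : L0 P) (he : e ∈ L0pp P) (f : L0 P) (hf : f ∈ L0pp P),
      ∀ᵐ ω ∂P, N.nm (Z e he - Z f hf) ω ≤ e ω + f ω := by
    intro e he f hf
    have h2 : ∀ᵐ ω ∂P, ∀ k j, ω ∈ partOf (Cs f) j →
        N.nm ((x (k+1)).1 - Z f hf) ω = N.nm ((x (k+1)).1 - (x (j+1)).1) ω := by
      rw [MeasureTheory.ae_all_iff]
      intro k
      filter_upwards [N.nm_sub_symm ((x (k+1)).1) (Z f hf),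
        hZloc f hf ((x (k+1)).1), hsymall] with ω ha hb hc j hj
      rw [ha, hb j hj, hc (j+1) (k+1)]
    have he' : ∀ᵐ ω ∂P, 0 < e ω := he
    have hf' : ∀ᵐ ω ∂P, 0 < f ω := hf
    filter_upwards [hZloc e he (Z f hf), h2, hmemCs e he, hmemCs f hf, hCall, hsymall,
      hαpos, he', hf'] with ω h1 h2 h3 h4 h5 h6 h7 h8 h9
    obtain ⟨k, hk⟩ := Set.mem_iUnion.1 ((partOf_union (Cs e)) ▸ Set.mem_univ ω :
      ω ∈ ⋃ i, partOf (Cs e) i)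
    obtain ⟨j, hj⟩ := Set.mem_iUnion.1 ((partOf_union (Cs f)) ▸ Set.mem_univ ω :
      ω ∈ ⋃ i, partOf (Cs f) i)
    rw [h1 k hk, h2 k j hj]
    rcases le_or_gt k j with hkj | hkj
    · have := h5 k (j+1) (by omega)
      rw [h6 (j+1) (k+1)] at this
      have hle : N.nm ((x (k+1)).1 - (x (j+1)).1) ω ≤ (1/2:ℝ)^k / α ω := by
        rw [le_div_iff₀ h7]
        linarith [this]
      have : (1/2:ℝ)^k / α ω ≤ e ω := by
        rw [div_le_iff₀ h7]
        have := h3 k hk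
        linarith
      linarith
    · have := h5 j (k+1) (by omega)
      have hle : N.nm ((x (k+1)).1 - (x (j+1)).1) ω ≤ (1/2:ℝ)^j / α ω := by
        rw [le_div_iff₀ h7]
        linarith [this]
      have : (1/2:ℝ)^j / α ω ≤ f ω := by
        rw [div_le_iff₀ h7]
        have := h4 j hj
        linarith
      linarith
  -- distance from Z e to the sequence
  have hZxn : ∀ (e : L0 P) (he : e ∈ L0pp P) (n : ℕ), ∀ᵐ ω ∂P,
      N.nm (Z e he - (x (n+1)).1) ω ≤ (1/2:ℝ)^n / α ω + e ω := by
    intro e he n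
    have he' : ∀ᵐ ω ∂P, 0 < e ω := he
    filter_upwards [hZloc e he ((x (n+1)).1), hmemCs e he, hCall, hsymall, hαpos, he']
      with ω h1 h3 h5 h6 h7 h9
    obtain ⟨k, hk⟩ := Set.mem_iUnion.1 ((partOf_union (Cs e)) ▸ Set.mem_univ ω :
      ω ∈ ⋃ i, partOf (Cs e) i)
    rw [h1 k hk]
    rcases le_or_gt n k with hnk | hnk
    · have := h5 n (k+1) (by omega)
      have hle : N.nm ((x (k+1)).1 - (x (n+1)).1) ω ≤ (1/2:ℝ)^n / α ω := by
        rw [le_div_iff₀ h7]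
        linarith [this]
      linarith
    · have := h5 k (n+1) (by omega)
      rw [h6 (n+1) (k+1)] at this
      have hle : N.nm ((x (k+1)).1 - (x (n+1)).1) ω ≤ (1/2:ℝ)^k / α ω := by
        rw [le_div_iff₀ h7]
        linarith [this]
      have h10 : (1/2:ℝ)^k / α ω ≤ e ω := by
        rw [div_le_iff₀ h7]
        have := h3 k hk
        linarith
      have h11 : (0:ℝ) ≤ (1/2:ℝ)^n / α ω := by positivity
      linarith
  -- the Cauchy filter
  set Tset : L0 P → Set E := fun γ =>
    {y | ∃ e, ∃ he : e ∈ L0pp P, (∀ᵐ ω ∂P, e ω ≤ γ ω) ∧ y = Z e he} with hTdef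
  set F : Filter E := ⨅ γ : {γ : L0 P // γ ∈ L0pp P}, Filter.principal (Tset γ.1)
    with hFdef
  have hTmem : ∀ γ : {γ : L0 P // γ ∈ L0pp P}, Tset γ.1 ∈ F :=
    fun γ => Filter.mem_iInf_of_mem γ (Filter.mem_principal_self _)
  have hTne : ∀ (γ : L0 P) (hγ : γ ∈ L0pp P), Z γ hγ ∈ Tset γ :=
    fun γ hγ => ⟨γ, hγ, Filter.Eventually.of_forall (fun ω => le_refl _), rfl⟩
  have hTmin : ∀ γ₁ γ₂ : L0 P, Tset (l0min γ₁ γ₂) ⊆ Tset γ₁ ∩ Tset γ₂ := by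
    intro γ₁ γ₂ y hy
    obtain ⟨e, he, hle, rfl⟩ := hy
    constructor
    · refine ⟨e, he, ?_, rfl⟩
      filter_upwards [hle, hl0minco γ₁ γ₂] with ω h1 h2
      rw [h2] at h1
      exact h1.trans (min_le_left _ _)
    · refine ⟨e, he, ?_, rfl⟩
      filter_upwards [hle, hl0minco γ₁ γ₂] with ω h1 h2
      rw [h2] at h1
      exact h1.trans (min_le_right _ _)
  have hFne : F.NeBot := by
    rw [hFdef]
    apply Filter.iInf_neBot_of_directed
    · intro γ₁ γ₂
      refine ⟨⟨l0min γ₁.1 γ₂.1, hl0minpp _ _ γ₁.2 γ₂.2⟩, ?_, ?_⟩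
      · exact Filter.principal_mono.2 ((Set.subset_inter_iff.1 (hTmin γ₁.1 γ₂.1)).1)
      · exact Filter.principal_mono.2 ((Set.subset_inter_iff.1 (hTmin γ₁.1 γ₂.1)).2)
    · intro γ
      exact Filter.principal_neBot_iff.2 ⟨Z γ.1 γ.2, hTne γ.1 γ.2⟩
  have hFcauchy : F ×ˢ F ≤ N.cUniformity := by
    rw [RNModule.cUniformity]
    refine le_iInf₂ ?_
    intro ε0 hε0
    rw [Filter.le_principal_iff]
    set γ : L0 P := AEEqFun.mk (fun ω => ε0 ω / 2)
      ((ε0.measurable.div_const 2).aestronglyMeasurable) with hγdef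
    have hγco : ⇑γ =ᵐ[P] fun ω => ε0 ω / 2 := AEEqFun.coeFn_mk _ _
    have hε0' : ∀ᵐ ω ∂P, 0 < ε0 ω := hε0
    have hγpp : γ ∈ L0pp P := by
      show ∀ᵐ ω ∂P, 0 < γ ω
      filter_upwards [hγco, hε0'] with ω h1 h2
      rw [h1]
      linarith
    apply Filter.mem_prod_iff.2 ⟨Tset γ, hTmem ⟨γ, hγpp⟩, Tset γ, hTmem ⟨γ, hγpp⟩, ?_⟩
    rintro ⟨y₁, y₂⟩ ⟨⟨e, he, hle, rfl⟩, ⟨f, hf, hlf, rfl⟩⟩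
    show ∀ᵐ ω ∂P, N.nm (Z e he - Z f hf) ω ≤ ε0 ω
    filter_upwards [hZpair e he f hf, hle, hlf, hγco] with ω h1 h2 h3 h4
    rw [h4] at h2 h3
    linarith
  obtain ⟨z, hzF⟩ := hcomp F hFne hFcauchy
  have honepp : (1 : L0 P) ∈ L0pp P := by
    show ∀ᵐ ω ∂P, 0 < (1 : L0 P) ω
    filter_upwards [AEEqFun.coeFn_one (β := ℝ) (μ := P)] with ω h
    rw [h]
    norm_num
  have hFG : F ≤ Filter.principal G := Filter.le_principal_iff.2
    (Filter.mem_of_superset (hTmem ⟨1, honepp⟩) (by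
      rintro y ⟨e, he, _, rfl⟩
      exact hZG e he))
  have hzG : z ∈ G := hGcl z (hFne.mono (le_inf hzF hFG))
  have hball : ∀ d : L0 P, d ∈ L0pp P →
      {y : E | ∀ᵐ ω ∂P, N.nm (y - z) ω ≤ d ω} ∈ N.cNhds z :=
    fun d hd => Filter.mem_iInf_of_mem d (Filter.mem_iInf_of_mem hd
      (Filter.mem_principal_self _))
  -- distance from the sequence to z
  have hxz : ∀ n, ∀ᵐ ω ∂P, N.nm ((x (n+1)).1 - z) ω ≤ (1/2:ℝ)^n / α ω := by
    intro n
    have key : ∀ t : ℝ, 0 < t →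
        ∀ᵐ ω ∂P, N.nm ((x (n+1)).1 - z) ω ≤ (1/2:ℝ)^n / α ω + t := by
      intro t ht
      set γ : L0 P := AEEqFun.const Ω (t/2 : ℝ) with hγdef
      have hγpp : γ ∈ L0pp P := hconst (t/2) (by linarith)
      have hγco : ⇑γ =ᵐ[P] Function.const Ω (t/2 : ℝ) := AEEqFun.coeFn_const _ _
      have hne : (Tset γ ∩ {y : E | ∀ᵐ ω ∂P, N.nm (y - z) ω ≤ γ ω}).Nonempty :=
        Filter.nonempty_of_mem (Filter.inter_mem (hTmem ⟨γ, hγpp⟩) (hzF (hball γ hγpp)))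
      obtain ⟨y, hyT, hyz⟩ := hne
      obtain ⟨e, he, hle, rfl⟩ := hyT
      have htri : ∀ᵐ ω ∂P, N.nm ((x (n+1)).1 - z) ω ≤
          N.nm ((x (n+1)).1 - Z e he) ω + N.nm (Z e he - z) ω := by
        have h := N.nm_add_le ((x (n+1)).1 - Z e he) (Z e he - z)
        rw [sub_add_sub_cancel] at h
        exact h
      filter_upwards [htri, N.nm_sub_symm ((x (n+1)).1) (Z e he), hZxn e he n, hyz, hle,
        hγco] with ω h1 h2 h3 h4 h5 h6
      rw [h6] at h4 h5
      rw [h2] at h1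
      simp only [Function.const_apply] at h4 h5
      linarith
    have hseq : ∀ᵐ ω ∂P, ∀ k : ℕ,
        N.nm ((x (n+1)).1 - z) ω ≤ (1/2:ℝ)^n / α ω + 1/(k+1) :=
      MeasureTheory.ae_all_iff.2 fun k => key (1/(k+1)) (by positivity)
    filter_upwards [hseq] with ω hω
    apply _root_.le_of_forall_pos_le_add
    intro t ht
    obtain ⟨k, hk⟩ := exists_nat_one_div_lt ht
    exact (hω k).trans (by linarith)
  -- φ(Z e) on pieces, and its real representative R e
  have hZphi : ∀ (e : L0 P) (he : e ∈ L0pp P), ∀ᵐ ω ∂P, ∀ k,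
      ω ∈ partOf (Cs e) k → φ (Z e he) ω = φ ((x (k+1)).1) ω :=
    fun e he => MeasureTheory.ae_all_iff.2 fun k => N.phi_eq_on_of_ind_eq hloc (hZeq e he k)
  set R : (e : L0 P) → e ∈ L0pp P → L0 P := fun e he =>
    AEEqFun.mk (fun ω => (φ (Z e he) ω).toReal)
      ((measurable_erealToReal.comp (φ (Z e he)).measurable).aestronglyMeasurable) with hRdef
  have hRco : ∀ (e : L0 P) (he : e ∈ L0pp P),
      ⇑(R e he) =ᵐ[P] fun ω => (φ (Z e he) ω).toReal := fun e he => AEEqFun.coeFn_mk _ _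
  have hRr : ∀ (e : L0 P) (he : e ∈ L0pp P), ∀ᵐ ω ∂P, ∀ k,
      ω ∈ partOf (Cs e) k → R e he ω = r (k+1) ω := by
    intro e he
    filter_upwards [hZphi e he, hRco e he, MeasureTheory.ae_all_iff.2 hrco]
      with ω h1 h2 h3 k hk
    rw [h2, h1 k hk, h3 (k+1)]
  have hZfin : ∀ (e : L0 P) (he : e ∈ L0pp P), ∀ᵐ ω ∂P,
      φ (Z e he) ω = ((R e he ω : ℝ) : EReal) := by
    intro e he
    filter_upwards [hZphi e he, MeasureTheory.ae_all_iff.2 hr, hRr e he] with ω h1 h2 h3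
    obtain ⟨k, hk⟩ := Set.mem_iUnion.1 ((partOf_union (Cs e)) ▸ Set.mem_univ ω :
      ω ∈ ⋃ i, partOf (Cs e) i)
    rw [h1 k hk, h2 (k+1), h3 k hk]
  have hRs : ∀ (e : L0 P) (he : e ∈ L0pp P), ∀ᵐ ω ∂P,
      |R e he ω - s ω| ≤ α ω * e ω := by
    intro e he
    filter_upwards [hRr e he, hmemCs e he, MeasureTheory.ae_all_iff.2 hsle,
      MeasureTheory.ae_all_iff.2 hsge] with ω h1 h2 h3 h4
    obtain ⟨k, hk⟩ := Set.mem_iUnion.1 ((partOf_union (Cs e)) ▸ Set.mem_univ ω :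
      ω ∈ ⋃ i, partOf (Cs e) i)
    rw [h1 k hk, abs_le]
    have ha := h3 (k+1)
    have hb := h4 k
    have hc := h2 k hk
    have hp : (0:ℝ) < (1/2)^k := by positivity
    constructor <;> linarith
  have hZz : ∀ (e : L0 P) (he : e ∈ L0pp P), ∀ᵐ ω ∂P, N.nm (Z e he - z) ω ≤ e ω := by
    intro e he
    filter_upwards [hZloc e he z, hmemCs e he, MeasureTheory.ae_all_iff.2 hxz, hαpos]
      with ω h1 h2 h3 h4
    obtain ⟨k, hk⟩ := Set.mem_iUnion.1 ((partOf_union (Cs e)) ▸ Set.mem_univ ω :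
      ω ∈ ⋃ i, partOf (Cs e) i)
    rw [h1 k hk]
    have ha := h3 k
    have hb : (1/2:ℝ)^k / α ω ≤ e ω := by
      rw [div_le_iff₀ h4]
      have := h2 k hk
      linarith
    linarith
  -- lower semicontinuity: φ z ≤ s
  have hφzs : ∀ᵐ ω ∂P, φ z ω ≤ ((s ω : ℝ) : EReal) := by
    apply hlsc z s hzG
    rw [Filter.inf_principal_neBot_iff]
    intro U hU
    obtain ⟨S₁, hS₁, S₂, hS₂, hsub⟩ := Filter.mem_prod_iff.1 hU
    rw [RNModule.cNhds] at hS₁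
    rw [cNhdsL0] at hS₂
    have hdir1 : DirectedOn ((fun d : L0 P =>
        Filter.principal {y : E | ∀ᵐ ω ∂P, N.nm (y - z) ω ≤ d ω}) ⁻¹'o (· ≥ ·))
        (L0pp P) := by
      intro d₁ hd₁ d₂ hd₂
      refine ⟨l0min d₁ d₂, hl0minpp _ _ hd₁ hd₂, ?_, ?_⟩
      · apply Filter.principal_mono.2
        intro y hy
        filter_upwards [hy, hl0minco d₁ d₂] with ω a1 a2
        rw [a2] at a1
        exact a1.trans (min_le_left _ _)
      · apply Filter.principal_mono.2
        intro y hy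
        filter_upwards [hy, hl0minco d₁ d₂] with ω a1 a2
        rw [a2] at a1
        exact a1.trans (min_le_right _ _)
    have hdir2 : DirectedOn ((fun d : L0 P =>
        Filter.principal {t : L0 P | ∀ᵐ ω ∂P, |t ω - s ω| ≤ d ω}) ⁻¹'o (· ≥ ·))
        (L0pp P) := by
      intro d₁ hd₁ d₂ hd₂
      refine ⟨l0min d₁ d₂, hl0minpp _ _ hd₁ hd₂, ?_, ?_⟩
      · apply Filter.principal_mono.2
        intro t ht
        filter_upwards [ht, hl0minco d₁ d₂] with ω a1 a2
        rw [a2] at a1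
        exact a1.trans (min_le_left _ _)
      · apply Filter.principal_mono.2
        intro t ht
        filter_upwards [ht, hl0minco d₁ d₂] with ω a1 a2
        rw [a2] at a1
        exact a1.trans (min_le_right _ _)
    obtain ⟨d₁, hd₁, hb₁⟩ := (Filter.mem_biInf_of_directed hdir1 ⟨1, honepp⟩).1 hS₁
    obtain ⟨d₂, hd₂, hb₂⟩ := (Filter.mem_biInf_of_directed hdir2 ⟨1, honepp⟩).1 hS₂
    set e₂ : L0 P := AEEqFun.mk (fun ω => (α ω)⁻¹ * d₂ ω)
      ((α.measurable.inv.mul d₂.measurable).aestronglyMeasurable) with he₂def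
    have he₂co : ⇑e₂ =ᵐ[P] fun ω => (α ω)⁻¹ * d₂ ω := AEEqFun.coeFn_mk _ _
    have hd₂' : ∀ᵐ ω ∂P, 0 < d₂ ω := hd₂
    have he₂pp : e₂ ∈ L0pp P := by
      show ∀ᵐ ω ∂P, 0 < e₂ ω
      filter_upwards [he₂co, hαpos, hd₂'] with ω a1 a2 a3
      rw [a1]
      positivity
    set e : L0 P := l0min d₁ e₂ with hedef
    have hepp : e ∈ L0pp P := hl0minpp _ _ hd₁ he₂pp
    refine ⟨(Z e hepp, R e hepp), hsub (Set.mem_prod.2 ⟨?_, ?_⟩), ?_, ?_⟩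
    · apply hb₁
      show ∀ᵐ ω ∂P, N.nm (Z e hepp - z) ω ≤ d₁ ω
      filter_upwards [hZz e hepp, hl0minco d₁ e₂] with ω a1 a2
      rw [a2] at a1
      exact a1.trans (min_le_left _ _)
    · apply hb₂
      show ∀ᵐ ω ∂P, |R e hepp ω - s ω| ≤ d₂ ω
      filter_upwards [hRs e hepp, hl0minco d₁ e₂, he₂co, hαpos] with ω a1 a2 a3 a4
      rw [a2] at a1
      have a6 : α ω * e₂ ω ≤ d₂ ω := by
        rw [a3, ← mul_assoc, mul_inv_cancel₀ a4.ne', one_mul]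
      have a7 : α ω * min (d₁ ω) (e₂ ω) ≤ α ω * e₂ ω :=
        mul_le_mul_of_nonneg_left (min_le_right _ _) a4.le
      linarith
    · exact hZG e hepp
    · filter_upwards [hZfin e hepp] with ω a1
      exact le_of_eq a1
  -- z is below the whole sequence
  have hzFs : ∀ n, ∀ᵐ ω ∂P,
      φ z ω + ((α ω * N.nm (z - (x n).1) ω : ℝ) : EReal) ≤ φ (x n).1 ω := by
    intro n
    have hreal : ∀ᵐ ω ∂P, s ω + α ω * N.nm (z - (x n).1) ω ≤ r n ω := by
      have hch : ∀ᵐ ω ∂P, ∀ m, n ≤ m →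
          r m ω + α ω * N.nm ((x m).1 - (x n).1) ω ≤ r n ω := by
        rw [MeasureTheory.ae_all_iff]
        intro m
        rcases le_or_gt n m with h | h
        · filter_upwards [hrchain n m h] with ω h1 _
          exact h1
        · filter_upwards [] with ω h1
          exact absurd h1 (by omega)
      have htris : ∀ᵐ ω ∂P, ∀ m,
          |N.nm ((x m).1 - (x n).1) ω - N.nm (z - (x n).1) ω| ≤ N.nm ((x m).1 - z) ω := by
        rw [MeasureTheory.ae_all_iff]
        intro m
        have t1 := N.nm_add_le ((x m).1 - z) (z - (x n).1)
        rw [sub_add_sub_cancel] at t1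
        have t2 := N.nm_add_le (z - (x m).1) ((x m).1 - (x n).1)
        rw [sub_add_sub_cancel] at t2
        have t3 := N.nm_sub_symm z ((x m).1)
        filter_upwards [t1, t2, t3] with ω a1 a2 a3
        rw [abs_le]
        constructor
        · rw [a3] at a2
          linarith
        · linarith
      filter_upwards [hch, htris, MeasureTheory.ae_all_iff.2 hxz, hstend, hαpos]
        with ω h1 h2 h3 h4 h5
      have hzero : Filter.Tendsto (fun m : ℕ => (1/2:ℝ)^m / α ω) Filter.atTop (nhds 0) := by
        have := tendsto_pow_atTop_nhds_zero_of_lt_one (by norm_num : (0:ℝ) ≤ 1/2)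
          (by norm_num : (1/2:ℝ) < 1)
        simpa using this.div_const (α ω)
      have hnm_tend : Filter.Tendsto (fun m => N.nm ((x (m+1)).1 - (x n).1) ω)
          Filter.atTop (nhds (N.nm (z - (x n).1) ω)) := by
        apply tendsto_of_tendsto_of_tendsto_of_le_of_le
          (g := fun m : ℕ => N.nm (z - (x n).1) ω - (1/2:ℝ)^m / α ω)
          (h := fun m : ℕ => N.nm (z - (x n).1) ω + (1/2:ℝ)^m / α ω)
        · simpa using tendsto_const_nhds.sub hzero
        · simpa using tendsto_const_nhds.add hzero
        · intro m
          have a1 := (abs_le.1 (h2 (m+1))).1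
          have a2 := h3 m
          simp only []
          linarith
        · intro m
          have a1 := (abs_le.1 (h2 (m+1))).2
          have a2 := h3 m
          simp only []
          linarith
      have hr_tend : Filter.Tendsto (fun m => r (m+1) ω) Filter.atTop (nhds (s ω)) :=
        (Filter.tendsto_add_atTop_iff_nat 1).2 h4
      have hsum : Filter.Tendsto
          (fun m => r (m+1) ω + α ω * N.nm ((x (m+1)).1 - (x n).1) ω) Filter.atTop
          (nhds (s ω + α ω * N.nm (z - (x n).1) ω)) :=
        hr_tend.add (tendsto_const_nhds.mul hnm_tend)
      exact le_of_tendsto hsum (Filter.eventually_atTop.2 ⟨n, fun m hm => h1 (m+1) (by omega)⟩)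
    filter_upwards [hφzs, hreal, hr n] with ω h1 h2 h3
    calc φ z ω + ((α ω * N.nm (z - (x n).1) ω : ℝ) : EReal)
        ≤ ((s ω : ℝ) : EReal) + ((α ω * N.nm (z - (x n).1) ω : ℝ) : EReal) :=
          add_le_add_left h1 _
      _ = (((s ω + α ω * N.nm (z - (x n).1) ω : ℝ)) : EReal) := (EReal.coe_add _ _).symm
      _ ≤ ((r n ω : ℝ) : EReal) := EReal.coe_le_coe_iff.2 h2
      _ = φ (x n).1 ω := h3.symm
  have hconc1 : ∀ᵐ ω ∂P, φ z ω + ((α ω * N.nm (z - x₀) ω : ℝ) : EReal) ≤ φ x₀ ω := by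
    have h := hzFs 0
    rw [hx0] at h
    exact h
  -- conclusion 2
  set ξe : L0e P := AEEqFun.comp Real.toEReal continuous_coe_real_ereal ξ with hξedef
  have hξeco : ⇑ξe =ᵐ[P] fun ω => ((ξ ω : ℝ) : EReal) := AEEqFun.coeFn_comp _ _ _
  have hηbot : ∀ᵐ ω ∂P, ((ξ ω : ℝ) : EReal) ≤ η ω := by
    have h := hηinf.2 ξe (fun y hy => by
      filter_upwards [hξeco, hξ y hy] with ω h1 h2
      rw [h1]
      exact h2)
    filter_upwards [h, hξeco] with ω h1 h2
    rw [← h2]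
    exact h1
  have hconc2 : ∀ᵐ ω ∂P, N.nm (z - x₀) ω ≤ (α ω)⁻¹ * ε ω := by
    filter_upwards [hconc1, hx₀η, hηinf.1 z hzG, hηbot, hηtop, hαpos,
      N.nm_nonneg (z - x₀)] with ω h1 h2 h3 h4 h5 h6 h7
    have hchain2 : η ω + ((α ω * N.nm (z - x₀) ω : ℝ) : EReal) ≤ φ x₀ ω :=
      le_trans (add_le_add_left h3 _) h1
    have hcancel : α ω * N.nm (z - x₀) ω ≤ ε ω :=
      ereal_cancel hchain2 h2 h5.ne (lt_of_lt_of_le (EReal.bot_lt_coe _) h4).ne'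
    have : N.nm (z - x₀) ω ≤ ε ω / α ω := by
      rw [le_div_iff₀ h6]
      linarith
    rw [div_eq_inv_mul] at this
    exact this
  refine ⟨z, hzG, hconc1, hconc2, ?_⟩
  -- conclusion 3
  intro y hyG hyne
  set fz : Ω → ℝ := fun ω => (φ z ω).toReal with hfzdef
  have hfzmeas : Measurable fz := measurable_erealToReal.comp (φ z).measurable
  have hfzco : ∀ᵐ ω ∂P, φ z ω = ((fz ω : ℝ) : EReal) := by
    filter_upwards [hφzs, hbot z hzG] with ω h1 h2
    have hne : φ z ω ≠ ⊤ := (lt_of_le_of_lt h1 (EReal.coe_lt_top _)).ne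
    exact (EReal.coe_toReal hne h2.ne').symm
  set cc : Ω → ℝ := fun ω => α ω * N.nm (y - z) ω with hccdef
  have hccmeas : Measurable cc := α.measurable.mul (N.nm (y - z)).measurable
  set A : Set Ω := {ω | φ y ω = ⊤} ∪ {ω | fz ω < (φ y ω).toReal + cc ω} with hAdef
  have hAmeas : MeasurableSet A :=
    ((φ y).measurable (measurableSet_singleton ⊤)).union
      (measurableSet_lt hfzmeas ((measurable_erealToReal.comp (φ y).measurable).add hccmeas))
  by_cases hPA : P A = 0
  · exfalso
    have hyFs : y ∈ Fs N φ α G z := by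
      refine ⟨hyG, ?_⟩
      filter_upwards [MeasureTheory.measure_eq_zero_iff_ae_notMem.1 hPA, hfzco, hbot y hyG]
        with ω h1 h2 h3
      have hnm : ω ∉ ({ω | φ y ω = ⊤} : Set Ω) ∧
          ω ∉ ({ω | fz ω < (φ y ω).toReal + cc ω} : Set Ω) := by
        constructor
        · intro hmem
          exact h1 (by rw [hAdef]; exact Set.mem_union_left _ hmem)
        · intro hmem
          exact h1 (by rw [hAdef]; exact Set.mem_union_right _ hmem)
      have hn1 : φ y ω ≠ ⊤ := hnm.1
      have hn2 : (φ y ω).toReal + cc ω ≤ fz ω := not_lt.1 hnm.2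
      have hyeq : φ y ω = (((φ y ω).toReal : ℝ) : EReal) :=
        (EReal.coe_toReal hn1 h3.ne').symm
      rw [h2, hyeq, ← EReal.coe_add]
      exact EReal.coe_le_coe_iff.2 hn2
    have hyz : ∀ n : ℕ, ∀ᵐ ω ∂P, α ω * N.nm (y - z) ω ≤ (1/2:ℝ)^n := by
      intro n
      have hzFsn : z ∈ Fs N φ α G (x n).1 := ⟨hzG, hzFs n⟩
      have hyFsn : y ∈ Fs N φ α G (x n).1 := Fs_trans hαnn hyFs hzFsn
      have happ := happrox n y hyFsn
      filter_upwards [hyFs.2, hφzs, hsle (n+1), hr (n+1), happ, hbot y hyG]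
        with ω h1 h2 h3 h4 h5 h6
      have hchain2 : φ y ω + ((α ω * N.nm (y - z) ω : ℝ) : EReal) ≤ φ ((x (n+1)).1) ω := by
        refine le_trans (le_trans h1 h2) ?_
        rw [h4]
        exact EReal.coe_le_coe_iff.2 h3
      have hyne2 : φ y ω ≠ ⊤ := by
        intro htop
        rw [htop, h4] at hchain2
        rw [EReal.top_add_coe] at hchain2
        exact absurd hchain2 (EReal.coe_lt_top _).not_ge
      exact ereal_cancel hchain2 h5 hyne2 h6.ne'
    have hnmzero : N.nm (y - z) = 0 := by
      apply MeasureTheory.AEEqFun.ext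
      filter_upwards [MeasureTheory.ae_all_iff.2 hyz, hαpos, N.nm_nonneg (y - z),
        AEEqFun.coeFn_zero (β := ℝ) (μ := P)] with ω h1 h2 h3 h4
      rw [h4, Pi.zero_apply]
      have hle0 : N.nm (y - z) ω ≤ 0 := by
        by_contra hpos
        push_neg at hpos
        obtain ⟨n, hn⟩ := exists_pow_lt_of_lt_one (mul_pos h2 hpos)
          (by norm_num : (1/2:ℝ) < 1)
        exact absurd (h1 n) (not_le.2 hn)
      exact le_antisymm hle0 h3
    exact hyne (sub_eq_zero.1 ((N.nm_eq_zero_iff (y - z)).1 hnmzero))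
  · refine ⟨A, hAmeas, pos_iff_ne_zero.2 hPA, ?_⟩
    filter_upwards [hfzco, hbot y hyG] with ω h1 h2 hmem
    rw [hAdef] at hmem
    by_cases htop : φ y ω = ⊤
    · rw [htop, EReal.top_add_coe, h1]
      exact EReal.coe_lt_top _
    · rcases hmem with hm | hm
      · exact absurd hm htop
      · have hm' : fz ω < (φ y ω).toReal + cc ω := hm
        have hyeq : φ y ω = (((φ y ω).toReal : ℝ) : EReal) :=
          (EReal.coe_toReal htop h2.ne').symm
        rw [h1, hyeq, ← EReal.coe_add]
        exact EReal.coe_lt_coe_iff.2 hm'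
end GYY
end
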